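/- arXiv:0911.2415 — 10 statements merged into one kernel-verified Lean document; each statement's English description precedes it below -/
import Mathlib

section
/- For every nonnegative integer n, the sum over k from 0 to n of binomial(n+k, 2k) * (-4)^k / (2k+1) equals (-1)^n / (2n+1). -/
private def Fq (n k : ℕ) : ℚ := ((n + k).choose (2 * k) : ℚ) * (-4) ^ k / (2 * k + 1)

private def gq (n : ℕ) : ℕ → ℚ
  | 0 => 0
  | (k+1) => -(-4 : ℚ) ^ (k+1) * ((n + k + 1).choose (2 * k + 1) : ℚ)

private lemma key (n k : ℕ) (hk : k ≤ n) :
    (2 * n + 3) * Fq (n + 1) k + (2 * n + 1) * Fq n k = gq n (k + 1) - gq n k := by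
  cases k with
  | zero =>
      simp [Fq, gq, Nat.choose_one_right]
      push_cast
      ring
  | succ k =>
      have hkn : k + 1 ≤ n := hk
      have r1 : ((n + k + 1).choose (2 * k + 2) : ℚ) * (2 * k + 2)
          = ((n + k + 1).choose (2 * k + 1) : ℚ) * ((n : ℚ) - k) := by
        have := Nat.choose_succ_right_eq (n + k + 1) (2 * k + 1)
        have hsub : n + k + 1 - (2 * k + 1) = n - k := by omega
        rw [hsub] at this
        have := congrArg (Nat.cast : ℕ → ℚ) this
        push_cast [Nat.cast_sub (by omega : k ≤ n)] at this
        convert this using 2 <;> ring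
      have r2 : ((n + k + 2).choose (2 * k + 2) : ℚ)
          = ((n + k + 1).choose (2 * k + 1) : ℚ) + ((n + k + 1).choose (2 * k + 2) : ℚ) := by
        have := Nat.choose_succ_succ (n + k + 1) (2 * k + 1)
        have := congrArg (Nat.cast : ℕ → ℚ) this
        push_cast at this
        convert this using 2 <;> ring
      have r3 : ((n : ℚ) + k + 2) * ((n + k + 1).choose (2 * k + 2) : ℚ)
          = ((n + k + 2).choose (2 * k + 3) : ℚ) * (2 * k + 3) := by
        have := Nat.add_one_mul_choose_eq (n + k + 1) (2 * k + 2)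
        have := congrArg (Nat.cast : ℕ → ℚ) this
        push_cast at this
        convert this using 2 <;> ring
      have hne : (2 * (k : ℚ) + 2 + 1) ≠ 0 := by positivity
      simp only [Fq, gq]
      rw [show n + 1 + (k+1) = n + k + 2 from by omega,
          show n + (k+1) = n + k + 1 from by omega,
          show 2*(k+1) = 2*k+2 from by omega,
          show n + k + 1 + 1 = n + k + 2 from by omega,
          show 2*k+2+1 = 2*k+3 from by omega]
      push_cast
      field_simp
      linear_combination (-4:ℚ)^(k+1) * ((2*(n:ℚ)+3) * r2 + 4 * r3 - 2 * r1)

theorem stmt_0 (n : ℕ) :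
    ∑ k ∈ Finset.range (n + 1),
      ((n + k).choose (2 * k) : ℚ) * (-4) ^ k / (2 * k + 1) =
    (-1) ^ n / (2 * n + 1) := by
  induction n with
  | zero => simp
  | succ n ih =>
      have htel : ∑ k ∈ Finset.range (n + 1), (gq n (k + 1) - gq n k)
          = gq n (n + 1) - gq n 0 := Finset.sum_range_sub (gq n) (n+1)
      have hsum : (2 * (n:ℚ) + 3) * ∑ k ∈ Finset.range (n + 1), Fq (n + 1) k
          + (2 * (n:ℚ) + 1) * ∑ k ∈ Finset.range (n + 1), Fq n k
          = gq n (n + 1) - gq n 0 := by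
        rw [← htel, Finset.mul_sum, Finset.mul_sum, ← Finset.sum_add_distrib]
        exact Finset.sum_congr rfl fun k hk =>
          key n k (by simpa using Nat.lt_succ_iff.mp (Finset.mem_range.mp hk))
      have hS : ∑ k ∈ Finset.range (n + 1), Fq n k = (-1 : ℚ) ^ n / (2 * n + 1) := by
        rw [← ih]; rfl
      have hgval : gq n (n + 1) = -(-4 : ℚ) ^ (n + 1) := by
        simp only [gq]
        rw [show n + n + 1 = 2 * n + 1 by omega, Nat.choose_self]
        simp
      rw [hS, hgval] at hsum
      simp only [gq, sub_zero] at hsum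
      have hsplit : ∑ k ∈ Finset.range (n + 1 + 1), Fq (n + 1) k
          = (∑ k ∈ Finset.range (n + 1), Fq (n + 1) k) + Fq (n + 1) (n + 1) :=
        Finset.sum_range_succ _ _
      have hlast : Fq (n + 1) (n + 1) = (-4 : ℚ) ^ (n + 1) / (2 * n + 3) := by
        simp only [Fq]
        rw [show n + 1 + (n + 1) = 2 * (n+1) by omega, Nat.choose_self]
        push_cast; ring
      have goal' : ∑ k ∈ Finset.range (n + 1 + 1), Fq (n + 1) k
          = (-1 : ℚ) ^ (n + 1) / (2 * (n + 1) + 1) := by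
        rw [hsplit, hlast]
        have h3 : (2 * (n:ℚ) + 3) ≠ 0 := by positivity
        have h1 : (2 * (n:ℚ) + 1) ≠ 0 := by positivity
        have hA : ∑ k ∈ Finset.range (n + 1), Fq (n + 1) k
            = (-(-4 : ℚ) ^ (n + 1) - (2 * n + 1) * ((-1:ℚ)^n / (2 * n + 1))) / (2 * n + 3) := by
          field_simp at hsum ⊢
          linarith [hsum]
        rw [hA]
        push_cast
        field_simp
        ring
      calc ∑ k ∈ Finset.range (n + 1 + 1),
            ((n + 1 + k).choose (2 * k) : ℚ) * (-4) ^ k / (2 * k + 1)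
          = ∑ k ∈ Finset.range (n + 1 + 1), Fq (n + 1) k := rfl
        _ = (-1 : ℚ) ^ (n + 1) / (2 * (n + 1) + 1) := goal'
        _ = (-1 : ℚ) ^ (n + 1) / (2 * (n + 1 : ℕ) + 1) := by push_cast; ring
end

section
/- For every nonnegative integer n, the sum over k from 0 to n of binomial(n+k, 2k) * (-1)^k / (2k+1) equals (-1)^n/(2n+1) if 3 does not divide 2n+1, and equals 2*(-1)^(n-1)/(2n+1) if 3 divides 2n+1. -/
open Finset

private def T (n k : ℕ) : ℚ := ((n + k).choose (2 * k) : ℚ) * (-1) ^ k / (2 * k + 1)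

private def Ssum (n : ℕ) : ℚ := ∑ k ∈ Finset.range (n + 1), T n k

private def Gc (n : ℕ) : ℕ → ℚ
  | 0 => 0
  | (j + 1) => (2 * n + 3) * (-1) ^ j * ((n + j + 1).choose (2 * j) : ℚ) / (2 * j + 1)

private lemma T_eq_zero {n k : ℕ} (h : n < k) : T n k = 0 := by
  unfold T
  rw [Nat.choose_eq_zero_of_lt (by omega)]
  simp

private lemma term0 (n : ℕ) :
    (2 * n + 5) * T (n + 2) 0 - (2 * n + 3) * T (n + 1) 0 + (2 * n + 1) * T n 0
      = Gc n 1 - Gc n 0 := by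
  simp [T, Gc]
  ring

private lemma termS (n j : ℕ) (hj : j ≤ n + 1) :
    (2 * n + 5) * T (n + 2) (j + 1) - (2 * n + 3) * T (n + 1) (j + 1)
      + (2 * n + 1) * T n (j + 1) = Gc n (j + 2) - Gc n (j + 1) := by
  have g1 : Gc n (j + 2) = (2 * (n : ℚ) + 3) * (-1) ^ (j + 1)
      * ((n + (j + 1) + 1).choose (2 * (j + 1)) : ℚ) / (2 * ((j + 1 : ℕ) : ℚ) + 1) := rfl
  have g2 : Gc n (j + 1) = (2 * (n : ℚ) + 3) * (-1) ^ j
      * ((n + j + 1).choose (2 * j) : ℚ) / (2 * (j : ℚ) + 1) := rfl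
  rw [g1, g2]
  unfold T
  have e1 : n + 2 + (j + 1) = n + j + 3 := by ring
  have e2 : n + 1 + (j + 1) = n + j + 2 := by ring
  have e3 : n + (j + 1) = n + j + 1 := by ring
  have e4 : 2 * (j + 1) = 2 * j + 2 := by ring
  have e5 : n + (j + 1) + 1 = n + j + 2 := by ring
  rw [e1, e2, e5, e3, e4]
  have p1 : ((n + j + 3).choose (2 * j + 2) : ℚ)
      = ((n + j + 1).choose (2 * j + 2) : ℚ) + 2 * ((n + j + 1).choose (2 * j + 1) : ℚ)
        + ((n + j + 1).choose (2 * j) : ℚ) := by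
    have h1 : (n + j + 3).choose (2 * j + 2)
        = (n + j + 2).choose (2 * j + 1) + (n + j + 2).choose (2 * j + 2) :=
      Nat.choose_succ_succ (n + j + 2) (2 * j + 1)
    have h2 : (n + j + 2).choose (2 * j + 2)
        = (n + j + 1).choose (2 * j + 1) + (n + j + 1).choose (2 * j + 2) :=
      Nat.choose_succ_succ (n + j + 1) (2 * j + 1)
    have h3 : (n + j + 2).choose (2 * j + 1)
        = (n + j + 1).choose (2 * j) + (n + j + 1).choose (2 * j + 1) :=
      Nat.choose_succ_succ (n + j + 1) (2 * j)
    push_cast [h1, h2, h3]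
    ring
  have p2 : ((n + j + 2).choose (2 * j + 2) : ℚ)
      = ((n + j + 1).choose (2 * j + 2) : ℚ) + ((n + j + 1).choose (2 * j + 1) : ℚ) := by
    have h2 : (n + j + 2).choose (2 * j + 2)
        = (n + j + 1).choose (2 * j + 1) + (n + j + 1).choose (2 * j + 2) :=
      Nat.choose_succ_succ (n + j + 1) (2 * j + 1)
    push_cast [h2]; ring
  have p3 : ((n + j + 1).choose (2 * j + 1) : ℚ) * (2 * (j : ℚ) + 1)
      = ((n + j + 1).choose (2 * j) : ℚ) * ((n : ℚ) + 1 - j) := by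
    have h := Nat.choose_succ_right_eq (n + j + 1) (2 * j)
    have hsub : n + j + 1 - 2 * j = n + 1 - j := by omega
    rw [hsub] at h
    have hq := congrArg (fun m : ℕ => (m : ℚ)) h
    push_cast [Nat.cast_sub (show j ≤ n + 1 from by omega)] at hq
    linarith [hq]
  have d2 : (2 * (j : ℚ) + 1) ≠ 0 := by positivity
  have key : ((n + j + 1).choose (2 * j + 1) : ℚ)
      = ((n + j + 1).choose (2 * j) : ℚ) * ((n : ℚ) + 1 - j) / (2 * (j : ℚ) + 1) := by
    rw [eq_div_iff d2]; linarith [p3]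
  have hpow : ((-1 : ℚ)) ^ (j + 1) = -(-1 : ℚ) ^ j := by rw [pow_succ]; ring
  rw [p1, p2, key, hpow]
  push_cast
  have d3 : (2 * (j : ℚ) + 3) ≠ 0 := by positivity
  field_simp
  ring

private lemma Gc_top (n : ℕ) : Gc n (n + 3) = 0 := by
  have hz : (n + (n + 2) + 1).choose (2 * (n + 2)) = 0 := Nat.choose_eq_zero_of_lt (by omega)
  show (2 * (n : ℚ) + 3) * (-1) ^ (n + 2) * ((n + (n + 2) + 1).choose (2 * (n + 2)) : ℚ)
      / (2 * ((n + 2 : ℕ) : ℚ) + 1) = 0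
  rw [hz]
  simp

private lemma sum_rec (n : ℕ) :
    (2 * n + 5) * Ssum (n + 2) - (2 * n + 3) * Ssum (n + 1) + (2 * n + 1) * Ssum n = 0 := by
  have ext1 : Ssum n = ∑ k ∈ range (n + 3), T n k := by
    unfold Ssum
    rw [Finset.sum_range_succ (n := n + 2), Finset.sum_range_succ (n := n + 1)]
    rw [T_eq_zero (by omega), T_eq_zero (by omega)]
    ring
  have ext2 : Ssum (n + 1) = ∑ k ∈ range (n + 3), T (n + 1) k := by
    unfold Ssum
    rw [Finset.sum_range_succ (n := n + 2)]
    rw [T_eq_zero (by omega)]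
    ring
  have ext3 : Ssum (n + 2) = ∑ k ∈ range (n + 3), T (n + 2) k := rfl
  rw [ext1, ext2, ext3, Finset.mul_sum, Finset.mul_sum, Finset.mul_sum,
    ← Finset.sum_sub_distrib, ← Finset.sum_add_distrib]
  have hcong : ∀ k ∈ range (n + 3),
      (2 * (n : ℚ) + 5) * T (n + 2) k - (2 * (n : ℚ) + 3) * T (n + 1) k
        + (2 * (n : ℚ) + 1) * T n k = Gc n (k + 1) - Gc n k := by
    intro k hk
    rcases k with _ | j
    · exact term0 n
    · exact termS n j (by simp at hk; omega)
  rw [Finset.sum_congr rfl hcong, Finset.sum_range_sub (Gc n), Gc_top]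
  simp [Gc]

private def cfun (n : ℕ) : ℚ := (-1) ^ (n / 3) * (if n % 3 = 1 then 2 else 1)

private lemma c_rec (n : ℕ) : cfun (n + 2) = cfun (n + 1) - cfun n := by
  unfold cfun
  have h : n % 3 = 0 ∨ n % 3 = 1 ∨ n % 3 = 2 := by omega
  rcases h with h | h | h
  · rw [show (n + 1) / 3 = n / 3 from by omega, show (n + 2) / 3 = n / 3 from by omega,
      show (n + 1) % 3 = 1 from by omega, show (n + 2) % 3 = 2 from by omega, h]
    norm_num
    ring
  · rw [show (n + 1) / 3 = n / 3 from by omega, show (n + 2) / 3 = n / 3 + 1 from by omega,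
      show (n + 1) % 3 = 2 from by omega, show (n + 2) % 3 = 0 from by omega, h]
    rw [pow_succ]
    norm_num
    ring
  · rw [show (n + 1) / 3 = n / 3 + 1 from by omega, show (n + 2) / 3 = n / 3 + 1 from by omega,
      show (n + 1) % 3 = 0 from by omega, show (n + 2) % 3 = 1 from by omega, h]
    rw [pow_succ]
    norm_num
    ring

private lemma Ssum_eq (n : ℕ) : Ssum n = cfun n / (2 * n + 1) := by
  induction n using Nat.twoStepInduction with
  | zero =>
      show (∑ k ∈ Finset.range 1, T 0 k) = _
      simp [T, cfun]
  | one =>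
      show (∑ k ∈ Finset.range 2, T 1 k) = _
      rw [Finset.sum_range_succ, Finset.sum_range_succ, Finset.sum_range_zero]
      simp [T, cfun]
      norm_num
  | more n ih1 ih2 =>
      have d1 : (2 * (n : ℚ) + 1) ≠ 0 := by positivity
      have d2 : (2 * ((n : ℚ) + 1) + 1) ≠ 0 := by positivity
      have hrec := sum_rec n
      rw [ih1, ih2] at hrec
      push_cast at hrec
      have h1 : (2 * (n : ℚ) + 3) * (cfun (n + 1) / (2 * ((n : ℚ) + 1) + 1)) = cfun (n + 1) := by
        field_simp; ring
      have h2 : (2 * (n : ℚ) + 1) * (cfun n / (2 * (n : ℚ) + 1)) = cfun n := by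
        field_simp
      rw [h1, h2] at hrec
      have hx : (2 * (n : ℚ) + 5) * Ssum (n + 2) = cfun (n + 1) - cfun n := by linarith
      rw [c_rec n]
      push_cast
      rw [eq_div_iff (by positivity : 2 * ((n : ℚ) + 2) + 1 ≠ 0)]
      linear_combination hx

private lemma neg_one_pow_mod (a : ℕ) : (-1 : ℚ) ^ a = (-1) ^ (a % 2) := by
  conv_lhs => rw [show a = 2 * (a / 2) + a % 2 from by omega]
  rw [pow_add, pow_mul]
  norm_num

theorem stmt_1 (n : ℕ) :
    ∑ k ∈ Finset.range (n + 1),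
      ((n + k).choose (2 * k) : ℚ) * (-1) ^ k / (2 * k + 1) =
    if 3 ∣ (2 * n + 1) then 2 * (-1 : ℚ) ^ (n - 1) / (2 * n + 1)
    else (-1 : ℚ) ^ n / (2 * n + 1) := by
  have h := Ssum_eq n
  unfold Ssum T cfun at h
  rw [h]
  by_cases hd : 3 ∣ (2 * n + 1)
  · rw [if_pos hd, if_pos (by omega : n % 3 = 1)]
    have hp : (n / 3) % 2 = (n - 1) % 2 := by omega
    rw [neg_one_pow_mod (n / 3), neg_one_pow_mod (n - 1), hp]
    ring
  · rw [if_neg hd, if_neg (by omega : ¬ n % 3 = 1)]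
    have hp : (n / 3) % 2 = n % 2 := by
      have h1 : n % 3 = 0 ∨ n % 3 = 2 := by omega
      rcases h1 with h1 | h1 <;> omega
    rw [neg_one_pow_mod (n / 3), neg_one_pow_mod n, hp]
    ring
end

section
/- Let p = 2n+1 be an odd prime. Then for every k with 0 ≤ k ≤ n, binomial(n+k, 2k) is congruent to binomial(2k, k)/(-16)^k modulo p², i.e., (-16)^k * binomial(n+k, 2k) ≡ binomial(2k, k) (mod p²). -/
open Finset

/-- product of the first k odd numbers times 2^k * k! equals (2k)!  -/
lemma odd_prod_eq (k : ℕ) :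
    (∏ i ∈ range k, (2 * (i:ℤ) + 1)) * (2 ^ k * ((Nat.factorial k : ℕ) : ℤ)) = ((Nat.factorial (2 * k) : ℕ) : ℤ) := by
  induction k with
  | zero => simp
  | succ k ih =>
    rw [prod_range_succ]
    have h1 : (2 * (k+1)) = (2*k+1) + 1 := by ring
    rw [h1, Nat.factorial_succ, Nat.factorial_succ, Nat.factorial_succ]
    push_cast
    linear_combination (2 * (k:ℤ) + 1) * (2 * (k:ℤ) + 2) * ih

lemma key_dvd (p n : ℕ) (hpn : p = 2 * n + 1) :
    ∀ k, k ≤ n →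
    ((p : ℤ)^2) ∣ 4 ^ k * ((n + k).descFactorial (2 * k) : ℤ)
      - (-1) ^ k * (∏ i ∈ range k, (2 * (i:ℤ) + 1)) ^ 2 := by
  intro k
  induction k with
  | zero => intro _; simp
  | succ k ih =>
    intro hk1
    have hk : k ≤ n := Nat.le_of_succ_le hk1
    obtain ⟨c, hc⟩ := ih hk
    have hD : ((n + (k+1)).descFactorial (2 * (k+1)) : ℤ)
        = ((n:ℤ) + k + 1) * ((n:ℤ) - k) * ((n + k).descFactorial (2 * k) : ℤ) := by
      have h1 : n + (k+1) = (n + k) + 1 := by ring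
      have h2 : 2 * (k+1) = (2*k + 1) + 1 := by ring
      rw [h1, h2, Nat.succ_descFactorial_succ, Nat.descFactorial_succ]
      have h3 : n + k - 2 * k = n - k := by omega
      rw [h3]
      have h4 : ((n - k : ℕ) : ℤ) = (n:ℤ) - k := by
        have := Int.ofNat_sub hk
        push_cast at this ⊢; omega
      push_cast [h4]; ring
    have hpz : (p : ℤ) = 2 * (n:ℤ) + 1 := by exact_mod_cast congrArg (Nat.cast : ℕ → ℤ) hpn
    refine ⟨4 ^ k * ((n + k).descFactorial (2 * k) : ℤ) - (2 * (k:ℤ) + 1)^2 * c, ?_⟩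
    rw [prod_range_succ, hD]
    have hc' : 4 ^ k * ((n + k).descFactorial (2 * k) : ℤ)
        - (-1) ^ k * (∏ i ∈ range k, (2 * (i:ℤ) + 1)) ^ 2 = (p:ℤ)^2 * c := hc
    linear_combination (4 * ((n:ℤ) + k + 1) * ((n:ℤ) - k) - (p:ℤ)^2 + (2*(k:ℤ)+1)^2) *
        (4:ℤ)^k * ((n + k).descFactorial (2 * k) : ℤ) * 0
      + (- (2*(k:ℤ)+1)^2) * hc'
      + (4:ℤ)^k * ((n + k).descFactorial (2 * k) : ℤ) *
          (by nlinarith [hpz] : 4 * ((n:ℤ) + k + 1) * ((n:ℤ) - k) = (p:ℤ)^2 - (2*(k:ℤ)+1)^2)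

theorem stmt_2 (p n : ℕ) (hp : p.Prime) (hodd : Odd p) (hpn : p = 2 * n + 1)
    (k : ℕ) (hk : k ≤ n) :
    ((-16 : ℤ) ^ k * ((n + k).choose (2 * k)) : ℤ) ≡
      ((2 * k).choose k : ℤ) [ZMOD ((p : ℤ) ^ 2)] := by
  -- notation
  set P : ℤ := ∏ i ∈ range k, (2 * (i:ℤ) + 1) with hP
  have hdvd := key_dvd p n hpn k hk
  -- descFactorial = (2k)! * choose
  have hdesc : ((n + k).descFactorial (2 * k) : ℤ) = ((Nat.factorial (2*k) : ℕ) : ℤ) * ((n + k).choose (2 * k) : ℤ) := by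
    rw [Nat.descFactorial_eq_factorial_mul_choose]; push_cast; ring
  rw [hdesc] at hdvd
  -- 4^k * P^2 = (2k)! * choose(2k,k)
  have hodd2 : P * (2 ^ k * ((Nat.factorial k : ℕ) : ℤ)) = ((Nat.factorial (2 * k) : ℕ) : ℤ) := odd_prod_eq k
  have hchoose : ((Nat.factorial (2*k) : ℕ) : ℤ) = ((2*k).choose k : ℤ) * ((Nat.factorial k : ℕ) : ℤ) * ((Nat.factorial k : ℕ) : ℤ) := by
    have h := Nat.choose_mul_factorial_mul_factorial (show k ≤ 2*k by omega)
    have h2 : 2*k - k = k := by omega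
    rw [h2] at h
    exact_mod_cast h.symm
  have hfact_ne : (((Nat.factorial k : ℕ) : ℤ)) ≠ 0 := by exact_mod_cast Nat.factorial_ne_zero k
  have h4P : 4 ^ k * P ^ 2 = ((Nat.factorial (2*k) : ℕ) : ℤ) * ((2*k).choose k : ℤ) := by
    have h := congrArg (fun x => x * x) hodd2
    try simp only at h
    have h2 : (4:ℤ)^k = 2^k * 2^k := by rw [← mul_pow]; norm_num
    apply mul_right_cancel₀ (mul_ne_zero hfact_ne hfact_ne)
    linear_combination h + ((Nat.factorial (2*k) : ℕ) : ℤ) * hchoose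
      + P^2 * ((Nat.factorial k : ℕ) : ℤ)^2 * h2
  -- multiply the dvd by (-4)^k
  have hdvd2 : ((p : ℤ)^2) ∣ ((Nat.factorial (2*k) : ℕ) : ℤ) *
      ((-16) ^ k * ((n + k).choose (2 * k) : ℤ) - ((2*k).choose k : ℤ)) := by
    have := Dvd.dvd.mul_left hdvd ((-4) ^ k)
    have heq : (-4:ℤ) ^ k * (4 ^ k * (((Nat.factorial (2*k) : ℕ) : ℤ) * ((n + k).choose (2 * k) : ℤ))
        - (-1) ^ k * P ^ 2)
        = ((Nat.factorial (2*k) : ℕ) : ℤ) * ((-16) ^ k * ((n + k).choose (2 * k) : ℤ) - ((2*k).choose k : ℤ)) := by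
      have e1 : (-4:ℤ)^k * 4^k = (-16)^k := by
        rw [← mul_pow]; norm_num
      have e2 : (-4:ℤ)^k * (-1)^k = 4^k := by
        rw [← mul_pow]; norm_num
      calc (-4:ℤ) ^ k * (4 ^ k * (((Nat.factorial (2*k) : ℕ) : ℤ) * ((n + k).choose (2 * k) : ℤ))
            - (-1) ^ k * P ^ 2)
          = ((-4:ℤ)^k * 4^k) * (((Nat.factorial (2*k) : ℕ) : ℤ) * ((n + k).choose (2 * k) : ℤ))
            - ((-4:ℤ)^k * (-1)^k) * P^2 := by ring
        _ = (-16:ℤ)^k * (((Nat.factorial (2*k) : ℕ) : ℤ) * ((n + k).choose (2 * k) : ℤ))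
            - (4^k * P^2) := by rw [e1, e2]
        _ = _ := by rw [h4P]; ring
    rwa [heq] at this
  -- p² coprime to (2k)!
  have hcop : IsCoprime ((p : ℤ)^2) (((Nat.factorial (2*k) : ℕ) : ℤ)) := by
    have hnd : ¬ p ∣ Nat.factorial (2*k) := by
      rw [hp.dvd_factorial]
      omega
    have : Nat.Coprime p (Nat.factorial (2*k)) := (Nat.Prime.coprime_iff_not_dvd hp).mpr hnd
    have : Nat.Coprime (p^2) (Nat.factorial (2*k)) := Nat.Coprime.pow_left 2 this
    have := Nat.isCoprime_iff_coprime.mpr this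
    exact_mod_cast this
  have hfinal : ((p : ℤ)^2) ∣ ((-16) ^ k * ((n + k).choose (2 * k) : ℤ) - ((2*k).choose k : ℤ)) :=
    hcop.dvd_of_dvd_mul_left hdvd2
  refine Int.modEq_iff_dvd.mpr ?_
  have heq : ((2*k).choose k : ℤ) - (-16) ^ k * ((n + k).choose (2 * k) : ℤ)
      = -(( -16) ^ k * ((n + k).choose (2 * k) : ℤ) - ((2*k).choose k : ℤ)) := by ring
  rw [heq]
  exact dvd_neg.mpr hfinal
end

section
/- Let p be an odd prime. Then the sum over k from 1 to (p-1)/2 of 4^k/(k * binomial(2k,k)) is congruent to 2*((-1)^((p-1)/2) - 1) modulo p. -/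
theorem stmt_3 (p : ℕ) (hp : p.Prime) (hodd : Odd p) :
    ∑ k ∈ Finset.Icc 1 ((p - 1) / 2),
      (4 : ZMod p) ^ k * ((k : ZMod p) * ((2 * k).choose k : ZMod p))⁻¹ =
    2 * ((-1 : ZMod p) ^ ((p - 1) / 2) - 1) := by
  haveI : Fact p.Prime := ⟨hp⟩
  set m := (p - 1) / 2 with hm
  have hp2 : p ≠ 2 := by
    rintro rfl
    exact (Nat.not_odd_iff_even.mpr (by norm_num)) hodd
  have hp3 : 3 ≤ p := by
    have := hp.two_le
    omega
  obtain ⟨t, ht⟩ := hodd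
  have h2m : 2 * m = p - 1 := by omega
  -- central binomial coefficients are nonzero mod p
  have hCB : ∀ k ≤ m, ((Nat.centralBinom k : ℕ) : ZMod p) ≠ 0 := by
    intro k hk
    rw [Ne, ZMod.natCast_eq_zero_iff]
    intro hdvd
    have h1 : p ∣ (2 * k).factorial := by
      have := Nat.choose_mul_factorial_mul_factorial
        (show k ≤ 2 * k by omega)
      have h2 : Nat.centralBinom k ∣ (2 * k).factorial :=
        ⟨k.factorial * (2 * k - k).factorial, by
          rw [Nat.centralBinom, ← mul_assoc, this]⟩
      exact hdvd.trans h2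
    have := (Nat.Prime.dvd_factorial hp).mp h1
    omega
  have hkne : ∀ k : ℕ, 1 ≤ k → k ≤ m → ((k : ℕ) : ZMod p) ≠ 0 := by
    intro k h1 h2
    rw [Ne, ZMod.natCast_eq_zero_iff]
    intro hdvd
    have := Nat.le_of_dvd (by omega) hdvd
    omega
  -- the telescoping function
  set f : ℕ → ZMod p := fun k => 4 ^ k * ((Nat.centralBinom k : ℕ) : ZMod p)⁻¹ with hf
  have hstep : ∀ j : ℕ, j + 1 ≤ m →
      (4 : ZMod p) ^ (j + 1) * (((j + 1 : ℕ) : ZMod p) *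
        ((Nat.centralBinom (j + 1) : ℕ) : ZMod p))⁻¹ = 2 * (f (j + 1) - f j) := by
    intro j hj
    have hb : ((Nat.centralBinom (j + 1) : ℕ) : ZMod p) ≠ 0 := hCB _ hj
    have hc : ((Nat.centralBinom j : ℕ) : ZMod p) ≠ 0 := hCB _ (by omega)
    have ha : (((j + 1 : ℕ)) : ZMod p) ≠ 0 := hkne _ (by omega) hj
    have hrel : (((j + 1 : ℕ)) : ZMod p) * ((Nat.centralBinom (j + 1) : ℕ) : ZMod p) =
        2 * (2 * (j : ZMod p) + 1) * ((Nat.centralBinom j : ℕ) : ZMod p) := by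
      have := congrArg (fun n : ℕ => (n : ZMod p)) (Nat.succ_mul_centralBinom_succ j)
      push_cast at this ⊢
      exact this
    push_cast at ha hrel ⊢
    simp only [hf]
    field_simp
    push_cast at hrel ⊢
    linear_combination (2 * (4 : ZMod p) ^ j) * hrel
  -- rewrite the sum as a range sum and telescope
  have hsum : ∑ k ∈ Finset.Icc 1 m,
      (4 : ZMod p) ^ k * ((k : ZMod p) * ((2 * k).choose k : ZMod p))⁻¹
      = 2 * (f m - f 0) := by
    rw [← Finset.Ico_add_one_right_eq_Icc, Finset.sum_Ico_eq_sum_range]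
    have hms : m + 1 - 1 = m := by omega
    rw [hms]
    rw [show (2 : ZMod p) * (f m - f 0) = ∑ i ∈ Finset.range m, (2 * (f (i + 1) - f i)) by
      rw [← Finset.mul_sum, Finset.sum_range_sub]]
    refine Finset.sum_congr rfl fun i hi => ?_
    have hi' : i + 1 ≤ m := by
      have := Finset.mem_range.mp hi
      omega
    have := hstep i hi'
    rw [show 1 + i = i + 1 by omega]
    rw [show (2 * (i + 1)).choose (i + 1) = Nat.centralBinom (i + 1) from rfl]
    exact this
  rw [hsum]
  -- evaluate f 0 and f m
  have hf0 : f 0 = 1 := by simp [hf]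
  have h4m : (4 : ZMod p) ^ m = 1 := by
    have h2ne : (2 : ZMod p) ≠ 0 := by
      rw [show (2 : ZMod p) = ((2 : ℕ) : ZMod p) by norm_num, Ne,
        ZMod.natCast_eq_zero_iff]
      intro hdvd
      have := Nat.le_of_dvd (by norm_num) hdvd
      omega
    calc (4 : ZMod p) ^ m = (2 : ZMod p) ^ (2 * m) := by rw [pow_mul]; norm_num
      _ = (2 : ZMod p) ^ (p - 1) := by rw [h2m]
      _ = 1 := ZMod.pow_card_sub_one_eq_one h2ne
  -- (p-1 choose k) = (-1)^k mod p
  have hchoose : ∀ k, k ≤ p - 1 → (((p - 1).choose k : ℕ) : ZMod p) = (-1) ^ k := by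
    intro k
    induction k with
    | zero => simp
    | succ n ih =>
      intro hn
      have h1 : ((p.choose (n + 1) : ℕ) : ZMod p) = 0 := by
        rw [ZMod.natCast_eq_zero_iff]
        exact Nat.Prime.dvd_choose_self hp (by omega) (by omega)
      have hpascal : p.choose (n + 1) = (p - 1).choose n + (p - 1).choose (n + 1) := by
        conv_lhs => rw [show p = (p - 1) + 1 by omega]
        exact Nat.choose_succ_succ _ _
      rw [hpascal] at h1
      push_cast at h1
      rw [ih (by omega)] at h1
      rw [pow_succ]
      linear_combination h1
  have hfm : f m = (-1 : ZMod p) ^ m := by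
    have hcb : ((Nat.centralBinom m : ℕ) : ZMod p) = (-1) ^ m := by
      rw [show Nat.centralBinom m = (p - 1).choose m by rw [Nat.centralBinom, h2m]]
      exact hchoose m (by omega)
    rw [hf]
    simp only [hcb, h4m, one_mul]
    rcases Nat.even_or_odd m with he | ho
    · rw [he.neg_one_pow]; norm_num
    · rw [ho.neg_one_pow]; norm_num
  rw [hfm, hf0]
end

section
/- For every positive integer n, the sum over k from 1 to n of 2^(2k-1)/(k * binomial(2k,k)) equals 2^(2n)/binomial(2n,n) - 1. -/
theorem stmt_4 (n : ℕ) (hn : 1 ≤ n) :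
    ∑ k ∈ Finset.Icc 1 n,
      (2 : ℚ) ^ (2 * k - 1) / (k * ((2 * k).choose k : ℚ)) =
    (2 : ℚ) ^ (2 * n) / ((2 * n).choose n : ℚ) - 1 := by
  induction n with
  | zero => omega
  | succ m ih =>
    rcases Nat.eq_zero_or_pos m with rfl | hm
    · norm_num
    · rw [Finset.sum_Icc_succ_top (by omega : 1 ≤ m + 1), ih hm]
      have hrec := Nat.succ_mul_centralBinom_succ m
      rw [Nat.centralBinom, Nat.centralBinom] at hrec
      have hC : ((2 * m).choose m : ℚ) ≠ 0 := by
        exact_mod_cast (Nat.choose_pos (by omega)).ne'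
      have hm1 : ((m : ℚ) + 1) ≠ 0 := by positivity
      have hrecQ : ((m : ℚ) + 1) * ((2 * (m + 1)).choose (m + 1) : ℚ)
          = 2 * (2 * m + 1) * ((2 * m).choose m : ℚ) := by
        exact_mod_cast congrArg (Nat.cast : ℕ → ℚ) hrec
      have hD : ((2 * (m + 1)).choose (m + 1) : ℚ)
          = 2 * (2 * m + 1) * ((2 * m).choose m : ℚ) / ((m : ℚ) + 1) := by
        field_simp
        linarith [hrecQ]
      have h1 : 2 * (m + 1) - 1 = 2 * m + 1 := by omega
      rw [h1, hD]
      have h2m1 : (2 * (m : ℚ) + 1) ≠ 0 := by positivity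
      push_cast
      field_simp
      ring
end

section
/- For every nonnegative integer n, the sum over k from 0 to n of (-1)^k * binomial(2n-k, k) equals 1 if n ≡ 0 or 1 (mod 3), and equals -1 if n ≡ 2 (mod 3). -/
private def Faux (m : ℕ) : ℤ := ∑ k ∈ Finset.range (m + 1), (-1 : ℤ) ^ k * ((m - k).choose k : ℤ)

private lemma Faux_rec (m : ℕ) : Faux (m + 2) = Faux (m + 1) - Faux m := by
  have h2 : Faux (m + 2) =
      (∑ j ∈ Finset.range (m + 1),
        (-1 : ℤ) ^ (j + 1) * (((m - j).choose j : ℤ) + ((m - j).choose (j + 1) : ℤ))) + 1 := by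
    rw [Faux, Finset.sum_range_succ' (fun k => (-1 : ℤ) ^ k * ((m + 2 - k).choose k : ℤ)),
      Finset.sum_range_succ]
    have h0 : (m + 2 - (m + 1 + 1)).choose (m + 1 + 1) = 0 := by
      simp [Nat.choose_eq_zero_of_lt]
    rw [h0]
    simp only [Nat.cast_zero, mul_zero, add_zero, pow_zero, Nat.sub_zero, Nat.choose_zero_right,
      Nat.cast_one, one_mul]
    congr 1
    apply Finset.sum_congr rfl
    intro j hj
    have hjm : j ≤ m := by simpa using Nat.lt_succ_iff.mp (Finset.mem_range.mp hj)
    have : m + 2 - (j + 1) = (m - j) + 1 := by omega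
    rw [this, Nat.choose_succ_succ]
    push_cast
    ring
  have h1 : Faux (m + 1) =
      (∑ j ∈ Finset.range (m + 1), (-1 : ℤ) ^ (j + 1) * ((m - j).choose (j + 1) : ℤ)) + 1 := by
    rw [Faux, Finset.sum_range_succ' (fun k => (-1 : ℤ) ^ k * ((m + 1 - k).choose k : ℤ))]
    simp only [pow_zero, Nat.sub_zero, Nat.choose_zero_right, Nat.cast_one, one_mul]
    congr 1
    apply Finset.sum_congr rfl
    intro j hj
    have : m + 1 - (j + 1) = m - j := by omega
    rw [this]
  have h0 : Faux m = ∑ j ∈ Finset.range (m + 1), (-1 : ℤ) ^ j * ((m - j).choose j : ℤ) := rfl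
  rw [h2, h1, h0]
  have hc : ∀ j ∈ Finset.range (m + 1),
      (-1 : ℤ) ^ (j + 1) * (((m - j).choose j : ℤ) + ((m - j).choose (j + 1) : ℤ)) =
      (-1 : ℤ) ^ (j + 1) * ((m - j).choose (j + 1) : ℤ) -
        (-1 : ℤ) ^ j * ((m - j).choose j : ℤ) := by
    intro j _
    ring
  rw [Finset.sum_congr rfl hc, Finset.sum_sub_distrib]
  ring

private lemma Faux_per (m : ℕ) : Faux (m + 6) = Faux m := by
  have h0 := Faux_rec m
  have h1 := Faux_rec (m + 1)
  have h2 := Faux_rec (m + 2)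
  have h3 := Faux_rec (m + 3)
  have h4 := Faux_rec (m + 4)
  have e1 : m + 1 + 2 = m + 3 := by omega
  have e2 : m + 2 + 2 = m + 4 := by omega
  have e3 : m + 3 + 2 = m + 5 := by omega
  have e4 : m + 4 + 2 = m + 6 := by omega
  rw [e1] at h1; rw [e2] at h2; rw [e3] at h3; rw [e4] at h4
  have e1' : m + 1 + 1 = m + 2 := by omega
  have e2' : m + 2 + 1 = m + 3 := by omega
  have e3' : m + 3 + 1 = m + 4 := by omega
  have e4' : m + 4 + 1 = m + 5 := by omega
  rw [e1'] at h1; rw [e2'] at h2; rw [e3'] at h3; rw [e4'] at h4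
  linarith

private lemma key_s6 : ∀ n : ℕ, Faux (2 * n) =
    if n % 3 = 0 then 1 else if n % 3 = 1 then 0 else -1 := by
  intro n
  induction n using Nat.strong_induction_on with
  | _ n ih =>
    match n with
    | 0 => norm_num [Faux, Finset.sum_range_succ]
    | 1 => norm_num [Faux, Finset.sum_range_succ]
    | 2 => norm_num [Faux, Finset.sum_range_succ, Nat.choose]
    | (n + 3) =>
      have h := ih n (by omega)
      have hp : Faux (2 * (n + 3)) = Faux (2 * n) := by
        have := Faux_per (2 * n)
        have e : 2 * n + 6 = 2 * (n + 3) := by omega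
        rw [e] at this
        exact this
      rw [hp, h]
      have : (n + 3) % 3 = n % 3 := by omega
      rw [this]

theorem stmt_6 (n : ℕ) :
    ∑ k ∈ Finset.range (n + 1), (-1 : ℤ) ^ k * ((2 * n - k).choose k : ℤ) =
    if n % 3 = 0 then 1 else if n % 3 = 1 then 0 else -1 := by
  have hext : ∑ k ∈ Finset.range (n + 1), (-1 : ℤ) ^ k * ((2 * n - k).choose k : ℤ)
      = Faux (2 * n) := by
    rw [Faux]
    apply Finset.sum_subset
    · intro x hx
      simp only [Finset.mem_range] at *
      omega
    · intro x _ hx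
      simp only [Finset.mem_range, not_lt] at hx
      have : (2 * n - x).choose x = 0 := Nat.choose_eq_zero_of_lt (by omega)
      rw [this]
      simp
  rw [hext, key_s6]
end

section
/- Let p > 3 be a prime. Then the sum over k from 1 to floor(p/6) of (-1)^k / k² is congruent to (-1)^((p-1)/2) * 10 * E_{p-3} modulo p, where E_m denotes the m-th Euler number. -/
open Finset

lemma Eodd (E : ℕ → ℤ)
    (hE : ∀ n : ℕ, 1 ≤ n →
      ∑ k ∈ Finset.range (n + 1),
        (if 2 ∣ k then (n.choose k : ℤ) * E (n - k) else 0) = 0) :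
    ∀ n, ¬ 2 ∣ n → E n = 0 := by
  intro n
  induction n using Nat.strong_induction_on with
  | _ n ih =>
    intro hodd
    have h1 : 1 ≤ n := by omega
    have h := hE n h1
    rw [Finset.sum_range_succ'] at h
    simp only [Nat.choose_zero_right, Nat.cast_one, one_mul, Nat.sub_zero, dvd_zero,
      if_true] at h
    have hz : ∀ k ∈ Finset.range n,
        (if 2 ∣ (k+1) then ((n.choose (k+1) : ℤ)) * E (n - (k+1)) else 0) = 0 := by
      intro k hk
      rw [Finset.mem_range] at hk
      by_cases hdvd : 2 ∣ (k+1)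
      · have : ¬ 2 ∣ (n - (k+1)) := by omega
        rw [if_pos hdvd, ih _ (by omega) this, mul_zero]
      · rw [if_neg hdvd]
    rw [Finset.sum_congr rfl hz] at h
    simpa using h

lemma chooseid {n s j : ℕ} (hj : j ≤ s) (hs : s ≤ n) :
    n.choose (s - j) * ((n - s + j).choose (n - s)) = n.choose s * s.choose j := by
  have h1 : n.choose (s - j) = n.choose (n - s + j) := by
    rw [← Nat.choose_symm (by omega : s - j ≤ n)]
    congr 1; omega
  rw [h1, Nat.choose_mul (by omega : n - s ≤ n - s + j)]
  congr 1
  · rw [← Nat.choose_symm hs]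
  · congr 1 <;> omega

lemma pow_add_pow_expand {R : Type*} [CommRing R] (x c : R) (m M : ℕ) (hmM : m ≤ M) :
    (x + c)^m + (x - c)^m =
      ∑ i ∈ range (M+1), (m.choose i : R) * x^i * c^(m-i) * (1 + (-1)^(m-i)) := by
  have h1 : (x + c)^m = ∑ i ∈ range (m+1), x^i * c^(m-i) * (m.choose i : R) := add_pow x c m
  have h2 : (x - c)^m = ∑ i ∈ range (m+1), x^i * ((-c)^(m-i)) * (m.choose i : R) := by
    rw [sub_eq_add_neg]; exact add_pow x (-c) m
  rw [h1, h2, ← Finset.sum_add_distrib]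
  rw [← Finset.sum_subset (Finset.range_subset_range.2 (by omega : m + 1 ≤ M + 1))
    (by intro i _ hi
        rw [Finset.mem_range, not_lt] at hi
        rw [Nat.choose_eq_zero_of_lt (by omega), Nat.cast_zero, zero_mul, zero_mul, zero_mul])]
  apply Finset.sum_congr rfl
  intro i _
  rw [neg_pow]
  ring

noncomputable def PP (p : ℕ) (E : ℕ → ℤ) (n : ℕ) (x : ZMod p) : ZMod p :=
  ∑ k ∈ range (n+1),
    (n.choose k : ZMod p) * (E k : ZMod p) * ((2 : ZMod p)⁻¹)^k * (x - (2:ZMod p)⁻¹)^(n-k)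

lemma PP_funeq {p : ℕ} [Fact p.Prime] (h2 : (2 : ZMod p) ≠ 0) (E : ℕ → ℤ)
    (hE0 : E 0 = 1) (n : ℕ) (hn : 1 ≤ n)
    (hrecR : ∀ s : ℕ, 1 ≤ s →
      ∑ i ∈ range (s + 1),
        (if 2 ∣ i then (s.choose i : ZMod p) * (E (s - i) : ZMod p) else 0) = 0)
    (x : ZMod p) :
    PP p E n (x + 1) + PP p E n x = 2 * x ^ n := by
  set c : ZMod p := (2:ZMod p)⁻¹ with hc
  have hcc : c + c = 1 := by
    rw [hc, ← two_mul]; exact mul_inv_cancel₀ h2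
  have hx1 : x + 1 - c = x + c := by
    rw [← hcc]; ring
  unfold PP
  rw [← Finset.sum_add_distrib]
  have step1 : ∀ k ∈ range (n+1),
      (n.choose k : ZMod p) * (E k : ZMod p) * c^k * (x + 1 - c)^(n-k) +
      (n.choose k : ZMod p) * (E k : ZMod p) * c^k * (x - c)^(n-k) =
      ∑ i ∈ range (n+1), (n.choose k : ZMod p) * (E k : ZMod p) * c^k *
        (((n-k).choose i : ZMod p) * x^i * c^(n-k-i) * (1 + (-1)^(n-k-i))) := by
    intro k hk
    rw [hx1, ← mul_add, pow_add_pow_expand x c (n-k) n (by omega), Finset.mul_sum]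
  rw [Finset.sum_congr rfl step1, Finset.sum_comm]
  have inner : ∀ i ∈ range (n+1),
      (∑ k ∈ range (n+1), (n.choose k : ZMod p) * (E k : ZMod p) * c^k *
        (((n-k).choose i : ZMod p) * x^i * c^(n-k-i) * (1 + (-1)^(n-k-i)))) =
      (if i = n then 2 else 0) * x ^ i := by
    intro i hi
    rw [Finset.mem_range] at hi
    set s := n - i with hs
    clear_value s
    have hsn : s ≤ n := by omega
    have hin : i = n - s := by omega
    -- restrict sum to range (s+1)
    rw [← Finset.sum_subset (Finset.range_subset_range.2 (by omega : s + 1 ≤ n + 1))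
      (by intro k hk1 hk2
          rw [Finset.mem_range] at hk1
          rw [Finset.mem_range, not_lt] at hk2
          rw [Nat.choose_eq_zero_of_lt (by omega : n - k < i), Nat.cast_zero]
          ring)]
    rw [← Finset.sum_range_reflect]
    have term : ∀ j ∈ range (s+1),
        (n.choose (s + 1 - 1 - j) : ZMod p) * (E (s + 1 - 1 - j) : ZMod p) * c^(s + 1 - 1 - j) *
          (((n-(s + 1 - 1 - j)).choose i : ZMod p) * x^i * c^(n-(s + 1 - 1 - j)-i) *
            (1 + (-1)^(n-(s + 1 - 1 - j)-i))) =
        ((n.choose s : ZMod p) * (c^s * x^i * 2)) *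
          (if 2 ∣ j then (s.choose j : ZMod p) * (E (s - j) : ZMod p) else 0) := by
      intro j hj
      rw [Finset.mem_range] at hj
      have e1 : s + 1 - 1 - j = s - j := by omega
      have e2 : n - (s - j) = i + j := by omega
      have e3 : n - (s - j) - i = j := by omega
      rw [e1, e3, e2]
      have e4 : ((i+j).choose i : ZMod p) = ((n - s + j).choose (n - s) : ZMod p) := by
        congr 2 <;> omega
      have e5 : (n.choose (s - j) : ZMod p) * ((n - s + j).choose (n - s) : ZMod p) =
          (n.choose s : ZMod p) * (s.choose j : ZMod p) := by
        rw [← Nat.cast_mul, ← Nat.cast_mul, chooseid (by omega) hsn]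
      have e6 : c^(s-j) * c^j = c^s := by
        rw [← pow_add]; congr 1; omega
      rcases Nat.even_or_odd j with hpar | hpar
      · rw [if_pos hpar.two_dvd]
        have : ((-1 : ZMod p))^j = 1 := hpar.neg_one_pow
        rw [this]
        calc (n.choose (s - j) : ZMod p) * (E (s-j) : ZMod p) * c^(s-j) *
              (((i+j).choose i : ZMod p) * x^i * c^j * (1 + 1))
            = ((n.choose (s - j) : ZMod p) * ((i+j).choose i : ZMod p)) *
                (c^(s-j) * c^j) * ((E (s-j) : ZMod p) * x^i * (1+1)) := by ring
          _ = _ := by rw [e4, e5, e6]; ring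
      · rw [if_neg (by simpa [Nat.odd_iff, Nat.two_dvd_ne_zero] using hpar)]
        have : ((-1 : ZMod p))^j = -1 := hpar.neg_one_pow
        rw [this]
        ring
    rw [Finset.sum_congr rfl term, ← Finset.mul_sum]
    by_cases hs0 : s = 0
    · subst hs0
      have hi' : i = n := by omega
      subst hi'
      simp [hE0]
      ring
    · rw [hrecR s (by omega), mul_zero, if_neg (by omega), zero_mul]
  rw [Finset.sum_congr rfl inner]
  simp only [ite_mul, zero_mul]
  rw [Finset.sum_ite_eq' (range (n+1)) n]
  simp [Finset.mem_range]

lemma PP_reflect {p : ℕ} [Fact p.Prime] (h2 : (2 : ZMod p) ≠ 0) (E : ℕ → ℤ)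
    (hEodd : ∀ k, ¬ 2 ∣ k → E k = 0) (n : ℕ) (hneven : 2 ∣ n) (x : ZMod p) :
    PP p E n (1 - x) = PP p E n x := by
  unfold PP
  apply Finset.sum_congr rfl
  intro k hk
  rw [Finset.mem_range] at hk
  by_cases h : 2 ∣ k
  · have hnk : 2 ∣ (n - k) := by omega
    have hcc : (2:ZMod p)⁻¹ + (2:ZMod p)⁻¹ = 1 := by field_simp; norm_num
    have hbase : 1 - x - (2:ZMod p)⁻¹ = -(x - (2:ZMod p)⁻¹) := by rw [← hcc]; ring
    rw [hbase, (even_iff_two_dvd.2 hnk).neg_pow]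
  · rw [hEodd k h]
    simp

lemma PP_half {p : ℕ} [Fact p.Prime] (E : ℕ → ℤ) (n : ℕ) :
    PP p E n ((2:ZMod p)⁻¹) = ((2:ZMod p)⁻¹)^n * (E n : ZMod p) := by
  unfold PP
  rw [Finset.sum_eq_single n]
  · simp [mul_comm]
  · intro k hk hkn
    rw [Finset.mem_range] at hk
    rw [sub_self, zero_pow (by omega : n - k ≠ 0), mul_zero]
  · intro h
    exact absurd (Finset.self_mem_range_succ n) h

lemma telescope {p : ℕ} [Fact p.Prime] (n : ℕ) (P : ZMod p → ZMod p)
    (hfun : ∀ x, P (x+1) + P x = 2*x^n) (N : ℕ) :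
    ∑ j ∈ Finset.range (N+1), (-1:ZMod p)^j * (2 * (j:ZMod p)^n) =
      P 0 + (-1:ZMod p)^N * P (N+1) := by
  induction N with
  | zero =>
    rw [Finset.sum_range_one]
    push_cast
    linear_combination -hfun 0
  | succ N ih =>
    rw [Finset.sum_range_succ, ih]
    have h := hfun ((N:ZMod p) + 1)
    push_cast
    linear_combination ((-1:ZMod p)^N) * h

lemma funeq_unique {p : ℕ} [Fact p.Prime] (h2 : (2 : ZMod p) ≠ 0) (hodd : Odd p)
    (n : ℕ) (f g : ZMod p → ZMod p)
    (hf : ∀ x, f (x+1) + f x = 2*x^n) (hg : ∀ x, g (x+1) + g x = 2*x^n) (x : ZMod p) :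
    f x = g x := by
  have key : ∀ (k : ℕ) (y : ZMod p), f (y + k) - g (y + k) = (-1:ZMod p)^k * (f y - g y) := by
    intro k
    induction k with
    | zero => intro y; simp
    | succ k ih =>
      intro y
      have e : (y + ((k:ZMod p) + 1)) = (y + k) + 1 := by ring
      push_cast
      rw [e]
      have hfk := hf (y + k)
      have hgk := hg (y + k)
      have := ih y
      rw [pow_succ]
      linear_combination hfk - hgk - this
  have h := key p x
  rw [ZMod.natCast_self, add_zero, hodd.neg_one_pow] at h
  have : (2 : ZMod p) * (f x - g x) = 0 := by linear_combination h
  rcases mul_eq_zero.1 this with h' | h'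
  · exact absurd h' h2
  · exact sub_eq_zero.1 h'

lemma PP_sixth {p : ℕ} [Fact p.Prime] (h2 : (2 : ZMod p) ≠ 0) (h3 : (3 : ZMod p) ≠ 0)
    (hodd : Odd p) (E : ℕ → ℤ) (hE0 : E 0 = 1)
    (hEodd : ∀ k, ¬ 2 ∣ k → E k = 0) (n : ℕ) (hn : 1 ≤ n) (hneven : 2 ∣ n)
    (hrecR : ∀ s : ℕ, 1 ≤ s →
      ∑ i ∈ Finset.range (s + 1),
        (if 2 ∣ i then (s.choose i : ZMod p) * (E (s - i) : ZMod p) else 0) = 0) :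
    2 * (3:ZMod p)^n * PP p E n ((6:ZMod p)⁻¹) =
      (1 + (3:ZMod p)^n) * ((2:ZMod p)⁻¹)^n * (E n : ZMod p) := by
  set t : ZMod p := (3:ZMod p)⁻¹ with ht
  have h33 : (3:ZMod p) * t = 1 := mul_inv_cancel₀ h3
  have hfun := PP_funeq h2 E hE0 n hn hrecR
  set P : ZMod p → ZMod p := PP p E n with hP
  set Q : ZMod p → ZMod p :=
    fun x => (3:ZMod p)^n * (P (x * t) - P ((x+1) * t) + P ((x+2) * t)) with hQ
  have hQfun : ∀ x, Q (x+1) + Q x = 2 * x^n := by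
    intro x
    have e : (x + 2 + 1) * t = x * t + 1 := by linear_combination x * 0 + h33
    have e2 : Q (x+1) = (3:ZMod p)^n * (P ((x+1) * t) - P ((x+2) * t) + P (x * t + 1)) := by
      rw [hQ]
      simp only
      rw [show x + 1 + 1 = x + 2 by ring, show x + 1 + 2 = x + 2 + 1 by ring, e]
    rw [e2, hQ]
    simp only
    have : (3:ZMod p)^n * (P ((x+1) * t) - P ((x+2) * t) + P (x * t + 1)) +
        (3:ZMod p)^n * (P (x * t) - P ((x+1) * t) + P ((x+2) * t)) =
        (3:ZMod p)^n * (P (x * t + 1) + P (x * t)) := by ring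
    rw [this, hfun (x * t), mul_pow, show (3:ZMod p)^n * (2 * (x^n * t^n)) =
      2 * x^n * ((3:ZMod p)^n * t^n) by ring, ← mul_pow, h33, one_pow, mul_one]
  have huniq := funeq_unique h2 hodd n P Q hfun hQfun ((2:ZMod p)⁻¹)
  have ha1 : (2:ZMod p)⁻¹ * t = (6:ZMod p)⁻¹ := by
    rw [ht, ← mul_inv]
    norm_num
  have ha2 : ((2:ZMod p)⁻¹ + 1) * t = (2:ZMod p)⁻¹ := by
    rw [ht]
    field_simp
    ring
  have ha3 : ((2:ZMod p)⁻¹ + 2) * t = 1 - (6:ZMod p)⁻¹ := by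
    have h6 : (6:ZMod p) ≠ 0 := by
      intro h
      apply h2
      have : (6:ZMod p) = 2 * 3 := by norm_num
      rw [this] at h
      rcases mul_eq_zero.1 h with h' | h'
      · exact h'
      · exact absurd h' h3
    rw [ht]
    field_simp
    ring
  rw [hQ] at huniq
  simp only at huniq
  rw [ha1, ha2, ha3] at huniq
  have hrefl : P (1 - (6:ZMod p)⁻¹) = P ((6:ZMod p)⁻¹) :=
    PP_reflect h2 E hEodd n hneven _
  rw [hrefl] at huniq
  have hhalf : P ((2:ZMod p)⁻¹) = ((2:ZMod p)⁻¹)^n * (E n : ZMod p) := PP_half E n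
  rw [hhalf] at huniq
  linear_combination -huniq

theorem stmt_8 (p : ℕ) (hp : p.Prime) (hp3 : 3 < p)
    (E : ℕ → ℤ) (hE0 : E 0 = 1)
    (hE : ∀ n : ℕ, 1 ≤ n →
      ∑ k ∈ Finset.range (n + 1),
        (if 2 ∣ k then (n.choose k : ℤ) * E (n - k) else 0) = 0) :
    ∑ k ∈ Finset.Icc 1 (p / 6), (-1 : ZMod p) ^ k * ((k : ZMod p) ^ 2)⁻¹ =
    (-1 : ZMod p) ^ ((p - 1) / 2) * 10 * (E (p - 3) : ZMod p) := by
  haveI : Fact p.Prime := ⟨hp⟩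
  have hp2d : ¬ 2 ∣ p := by
    intro h
    rcases (Nat.Prime.eq_one_or_self_of_dvd hp 2 h) with h' | h' <;> omega
  have hp3d : ¬ 3 ∣ p := by
    intro h
    rcases (Nat.Prime.eq_one_or_self_of_dvd hp 3 h) with h' | h' <;> omega
  have h2 : (2 : ZMod p) ≠ 0 := by
    have : ¬ p ∣ 2 := fun h => by have := Nat.le_of_dvd (by norm_num) h; omega
    have := (ZMod.natCast_eq_zero_iff 2 p).not.2 this
    simpa using this
  have h3 : (3 : ZMod p) ≠ 0 := by
    have : ¬ p ∣ 3 := fun h => by have := Nat.le_of_dvd (by norm_num) h; omega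
    have := (ZMod.natCast_eq_zero_iff 3 p).not.2 this
    simpa using this
  have h6 : (6 : ZMod p) ≠ 0 := by
    intro h
    have : (6:ZMod p) = 2 * 3 := by norm_num
    rw [this] at h
    rcases mul_eq_zero.1 h with h' | h'
    · exact h2 h'
    · exact h3 h'
  have hodd : Odd p := hp.odd_of_ne_two (by omega)
  set n := p - 3 with hn
  clear_value n
  have hn1 : 1 ≤ n := by omega
  have hneven : 2 ∣ n := by omega
  -- cast recurrence
  have hrecR : ∀ s : ℕ, 1 ≤ s →
      ∑ i ∈ Finset.range (s + 1),
        (if 2 ∣ i then (s.choose i : ZMod p) * (E (s - i) : ZMod p) else 0) = 0 := by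
    intro s hs
    have h0 : ∑ k ∈ Finset.range (s+1),
        ((if 2 ∣ k then (s.choose k : ℤ) * E (s - k) else 0 : ℤ) : ZMod p) = 0 := by
      rw [← Int.cast_sum, hE s hs, Int.cast_zero]
    refine Eq.trans ?_ h0
    apply Finset.sum_congr rfl
    intro i _
    split_ifs <;> push_cast <;> ring
  have hEodd := Eodd E hE
  have hfun := PP_funeq h2 E hE0 n hn1 hrecR
  -- P 0 = 0
  have hP1 : PP p E n 0 = PP p E n 1 := by
    have := PP_reflect h2 E hEodd n hneven 1
    simpa using this
  have hP0 : PP p E n 0 = 0 := by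
    have h := hfun 0
    rw [zero_add, ← hP1, zero_pow (by omega : n ≠ 0), mul_zero] at h
    have : (2 : ZMod p) * PP p E n 0 = 0 := by linear_combination h
    rcases mul_eq_zero.1 this with h' | h'
    · exact absurd h' h2
    · exact h'
  set N := p / 6 with hN
  clear_value N
  have tele := telescope n (PP p E n) hfun N
  -- value of N+1 in ZMod p
  have hr : p % 6 = 1 ∨ p % 6 = 5 := by omega
  have hcast : (6 : ZMod p) * ((N:ZMod p) + 1) = ((6 * (N + 1) % p : ℕ) : ZMod p) := by
    rw [ZMod.natCast_mod]
    push_cast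
    ring
  have hPN : PP p E n ((N:ZMod p) + 1) = PP p E n ((6:ZMod p)⁻¹) := by
    rcases hr with hr | hr
    · -- p % 6 = 1, 6(N+1) ≡ 5, N+1 = 5/6 = 1 - 1/6
      have h5 : 6 * (N + 1) % p = 5 := by
        have e : 6 * (N + 1) = p + 5 := by omega
        rw [e, Nat.add_mod_left]
        exact Nat.mod_eq_of_lt (by omega)
      have : (6 : ZMod p) * ((N:ZMod p) + 1) = 5 := by
        rw [hcast, h5]; norm_num
      have harg : (N:ZMod p) + 1 = 1 - (6:ZMod p)⁻¹ := by
        field_simp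
        linear_combination this
      rw [harg]
      exact PP_reflect h2 E hEodd n hneven _
    · have h1 : 6 * (N + 1) % p = 1 := by
        have e : 6 * (N + 1) = p + 1 := by omega
        rw [e, Nat.add_mod_left]
        exact Nat.mod_eq_of_lt (by omega)
      have : (6 : ZMod p) * ((N:ZMod p) + 1) = 1 := by
        rw [hcast, h1]; norm_num
      have harg : (N:ZMod p) + 1 = (6:ZMod p)⁻¹ := by
        field_simp
        linear_combination this
      rw [harg]
  -- convert target sum
  have hsum : ∑ j ∈ Finset.range (N+1), (-1:ZMod p)^j * (2 * (j:ZMod p)^n) =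
      2 * ∑ k ∈ Finset.Icc 1 N, (-1 : ZMod p) ^ k * ((k : ZMod p) ^ 2)⁻¹ := by
    rw [Finset.sum_range_succ']
    have e0 : (-1:ZMod p)^0 * (2 * ((0:ℕ):ZMod p)^n) = 0 := by
      push_cast
      rw [zero_pow (by omega : n ≠ 0)]
      ring
    rw [e0, add_zero, Finset.mul_sum]
    rw [show Finset.Icc 1 N = Finset.Ico 1 (N+1) by rw [Finset.Ico_add_one_right_eq_Icc],
      Finset.sum_Ico_eq_sum_range]
    apply Finset.sum_congr (by norm_num)
    intro j hj
    rw [Finset.mem_range] at hj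
    have hne : ((1 + j : ℕ) : ZMod p) ≠ 0 := by
      rw [Ne, ZMod.natCast_eq_zero_iff]
      intro hdvd
      have := Nat.le_of_dvd (by omega) hdvd
      have : N < p := by omega
      omega
    have hpow : ((1 + j : ℕ) : ZMod p)^n * ((1 + j : ℕ) : ZMod p)^2 = 1 := by
      rw [← pow_add]
      have : n + 2 = p - 1 := by omega
      rw [this]
      exact ZMod.pow_card_sub_one_eq_one hne
    have hinv : (((1 + j : ℕ) : ZMod p)^2)⁻¹ = ((1 + j : ℕ) : ZMod p)^n :=
      inv_eq_of_mul_eq_one_right (by rw [← hpow]; ring)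
    rw [hinv]
    push_cast
    ring
  rw [hsum, hP0, zero_add, hPN] at tele
  -- numeric evaluation of PP at 6⁻¹
  have hsix := PP_sixth h2 h3 hodd E hE0 hEodd n hn1 hneven hrecR
  have hA : (2:ZMod p)^n * 4 = 1 := by
    have hcard : (2:ZMod p)^p = 2 := by
      have := ZMod.pow_card (2 : ZMod p)
      simpa using this
    have hsplit : (2:ZMod p)^p = (2:ZMod p)^n * 8 := by
      have e : p = n + 3 := by omega
      calc (2:ZMod p)^p = (2:ZMod p)^(n+3) := congrArg (fun m => (2:ZMod p)^m) e
        _ = (2:ZMod p)^n * 8 := by rw [pow_add]; norm_num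
    rw [hsplit] at hcard
    have : (2:ZMod p) * ((2:ZMod p)^n * 4) = 2 * 1 := by
      rw [mul_one]; linear_combination hcard
    exact mul_left_cancel₀ h2 this
  have hB : (3:ZMod p)^n * 9 = 1 := by
    have hcard : (3:ZMod p)^p = 3 := by
      have := ZMod.pow_card (3 : ZMod p)
      simpa using this
    have hsplit : (3:ZMod p)^p = (3:ZMod p)^n * 27 := by
      have e : p = n + 3 := by omega
      calc (3:ZMod p)^p = (3:ZMod p)^(n+3) := congrArg (fun m => (3:ZMod p)^m) e
        _ = (3:ZMod p)^n * 27 := by rw [pow_add]; norm_num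
    rw [hsplit] at hcard
    have : (3:ZMod p) * ((3:ZMod p)^n * 9) = 3 * 1 := by
      rw [mul_one]; linear_combination hcard
    exact mul_left_cancel₀ h3 this
  have hinv2 : ((2:ZMod p)⁻¹)^n = 4 := by
    rw [inv_pow]
    exact inv_eq_of_mul_eq_one_right hA
  rw [hinv2] at hsix
  -- PP(6⁻¹) = 20 E n
  have hP6 : PP p E n ((6:ZMod p)⁻¹) = 20 * (E n : ZMod p) := by
    have step : (2:ZMod p) * PP p E n ((6:ZMod p)⁻¹) = 2 * (20 * (E n : ZMod p)) := by
      linear_combination 9 * hsix + (-2 * PP p E n ((6:ZMod p)⁻¹) + 4 * (E n : ZMod p)) * hB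
    exact mul_left_cancel₀ h2 step
  rw [hP6] at tele
  -- parity
  have hpar : (-1:ZMod p)^N = (-1:ZMod p)^((p-1)/2) := by
    have hmod : N % 2 = ((p-1)/2) % 2 := by omega
    rcases Nat.even_or_odd N with he | ho
    · have : Even ((p-1)/2) := by
        rw [Nat.even_iff] at he ⊢
        omega
      rw [he.neg_one_pow, this.neg_one_pow]
    · have : Odd ((p-1)/2) := by
        rw [Nat.odd_iff] at ho ⊢
        omega
      rw [ho.neg_one_pow, this.neg_one_pow]
  rw [hpar] at tele
  have final : (2:ZMod p) * (∑ k ∈ Finset.Icc 1 N, (-1 : ZMod p) ^ k * ((k : ZMod p) ^ 2)⁻¹) =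
      2 * ((-1 : ZMod p) ^ ((p - 1) / 2) * 10 * (E n : ZMod p)) := by
    linear_combination tele
  exact mul_left_cancel₀ h2 final
end

section
/- Let p > 3 be a prime. Then the sum over k from 0 to (p-3)/2 of binomial(2k,k)/((2k+1)*16^k) is congruent to 0 modulo p². -/
open Finset

def auxA (n : ℕ) : ℤ := ∑ k ∈ range (n+1), (-1)^k * ((n+k).choose (2*k) : ℤ)
def auxB (n : ℕ) : ℤ := ∑ k ∈ range (n+1), (-1)^k * ((n+k).choose (2*k+1) : ℤ)

lemma auxB_succ (n : ℕ) : auxB (n+1) = auxA n + auxB n := by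
  unfold auxA auxB
  have h : ∀ k ∈ range (n+1+1), (-1:ℤ)^k * ((n+1+k).choose (2*k+1) : ℤ)
      = (-1)^k * ((n+k).choose (2*k) : ℤ) + (-1)^k * ((n+k).choose (2*k+1) : ℤ) := by
    intro k _
    rw [show n+1+k = (n+k)+1 from by omega, Nat.choose_succ_succ (n+k) (2*k)]
    push_cast; ring
  rw [Finset.sum_congr rfl h, Finset.sum_add_distrib]
  rw [Finset.sum_range_succ (fun k => (-1:ℤ)^k * ((n+k).choose (2*k) : ℤ)),
      Finset.sum_range_succ (fun k => (-1:ℤ)^k * ((n+k).choose (2*k+1) : ℤ))]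
  have hz1 : (n+(n+1)).choose (2*(n+1)) = 0 := Nat.choose_eq_zero_of_lt (by omega)
  have hz2 : (n+(n+1)).choose (2*(n+1)+1) = 0 := Nat.choose_eq_zero_of_lt (by omega)
  rw [hz1, hz2]
  push_cast; ring

lemma auxA_succ' (n : ℕ) : auxA (n+1) = auxA n - auxB (n+1) := by
  have hS2 : ∑ i ∈ range (n+1), (-1:ℤ)^(i+1) * ((n+(i+1)).choose (2*(i+1)) : ℤ)
      = auxA n - 1 := by
    have hsplit := Finset.sum_range_succ' (fun k => (-1:ℤ)^k * ((n+k).choose (2*k) : ℤ)) (n+1)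
    have h0 : ∑ k ∈ range (n+1+1), (-1:ℤ)^k * ((n+k).choose (2*k) : ℤ) = auxA n := by
      rw [Finset.sum_range_succ (fun k => (-1:ℤ)^k * ((n+k).choose (2*k) : ℤ))]
      have hz1 : (n+(n+1)).choose (2*(n+1)) = 0 := Nat.choose_eq_zero_of_lt (by omega)
      rw [hz1]
      unfold auxA; push_cast; ring
    rw [h0] at hsplit
    simp only [Nat.mul_zero, Nat.add_zero, Nat.choose_zero_right, pow_zero, Nat.cast_one,
      one_mul, mul_one] at hsplit
    linarith [hsplit]
  have hS1 : auxB (n+1) = ∑ i ∈ range (n+1), (-1:ℤ)^i * ((n+1+i).choose (2*i+1) : ℤ) := by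
    unfold auxB
    rw [Finset.sum_range_succ (fun k => (-1:ℤ)^k * ((n+1+k).choose (2*k+1) : ℤ))]
    have hz : (n+1+(n+1)).choose (2*(n+1)+1) = 0 := Nat.choose_eq_zero_of_lt (by omega)
    rw [hz]
    push_cast; ring
  have hmain : auxA (n+1)
      = (∑ i ∈ range (n+1), ((-1:ℤ)^(i+1) * ((n+(i+1)).choose (2*(i+1)) : ℤ)
          - (-1)^i * ((n+1+i).choose (2*i+1) : ℤ))) + 1 := by
    unfold auxA
    rw [Finset.sum_range_succ' (fun k => (-1:ℤ)^k * ((n+1+k).choose (2*k) : ℤ)) (n+1)]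
    have h : ∀ i ∈ range (n+1), (-1:ℤ)^(i+1) * ((n+1+(i+1)).choose (2*(i+1)) : ℤ)
        = (-1:ℤ)^(i+1) * ((n+(i+1)).choose (2*(i+1)) : ℤ)
          - (-1)^i * ((n+1+i).choose (2*i+1) : ℤ) := by
      intro i _
      rw [show n+1+(i+1) = (n+1+i)+1 from by omega,
          show 2*(i+1) = (2*i+1)+1 from by omega,
          Nat.choose_succ_succ (n+1+i) (2*i+1)]
      simp only [Nat.succ_eq_add_one]
      rw [show n+(i+1) = (n+1+i) from by omega, show (2*i+1)+1 = 2*(i+1) from by omega]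
      push_cast; ring
    rw [Finset.sum_congr rfl h]
    simp
  rw [hmain, Finset.sum_sub_distrib, ← hS1, hS2]
  ring

lemma auxA_succ (n : ℕ) : auxA (n+1) = - auxB n := by
  rw [auxA_succ', auxB_succ]; ring

lemma auxA_add3 (n : ℕ) : auxA (n+3) = - auxA n := by
  rw [show n+3 = (n+2)+1 from rfl, auxA_succ, show n+2 = (n+1)+1 from rfl,
    auxB_succ, auxA_succ, auxB_succ]; ring

lemma auxB_add3 (n : ℕ) : auxB (n+3) = - auxB n := by
  rw [show n+3 = (n+2)+1 from rfl, auxB_succ, show n+2 = (n+1)+1 from rfl,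
    auxB_succ, auxA_succ, auxA_succ']; rw [auxB_succ]; ring

lemma auxC_val : ∀ n : ℕ, n % 3 ≠ 1 → auxA n + 2 * auxB n = (-1)^n := by
  intro n
  induction n using Nat.strong_induction_on with
  | _ n ih =>
    match n with
    | 0 => intro _; norm_num [auxA, auxB]
    | 1 => intro h; exact absurd rfl h
    | 2 =>
      intro _
      norm_num [auxA, auxB, Finset.sum_range_succ]
    | (n+3) =>
      intro h
      have hih := ih n (by omega) (by omega)
      rw [auxA_add3, auxB_add3]
      rw [show n+3 = n+3 from rfl]
      have : ((-1:ℤ))^(n+3) = -(-1)^n := by ring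
      rw [this]; linarith [hih]

lemma rat_sum (m : ℕ) (hm : m % 3 ≠ 1) :
    ∑ k ∈ range m, ((-1:ℚ)^k * ((m+k).choose (2*k) : ℚ) / (2*k+1)) = 0 := by
  have key : ∀ k ∈ range m, ((-1:ℚ)^k * ((m+k).choose (2*k) : ℚ) / (2*k+1))
      = ((-1:ℚ)^k * (((m+k).choose (2*k) : ℚ) + 2*((m+k).choose (2*k+1) : ℚ))) / (2*m+1) := by
    intro k hk
    have hk' : k < m := Finset.mem_range.mp hk
    rw [div_eq_div_iff (by positivity) (by positivity)]
    have hn := Nat.choose_succ_right_eq (m+k) (2*k)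
    rw [show m+k-2*k = m-k from by omega] at hn
    have hnat : (m+k).choose (2*k) * (2*m+1)
        = ((m+k).choose (2*k) + 2*(m+k).choose (2*k+1)) * (2*k+1) := by
      have : ((m+k).choose (2*k) + 2*(m+k).choose (2*k+1)) * (2*k+1)
          = (m+k).choose (2*k) * (2*k+1) + 2*((m+k).choose (2*k+1) * (2*k+1)) := by ring
      rw [this, hn]
      have h2 : 2*m+1 = 2*k+1+2*(m-k) := by omega
      rw [h2]; ring
    have hq : ((m+k).choose (2*k) : ℚ) * (2*m+1)
        = (((m+k).choose (2*k) : ℚ) + 2*((m+k).choose (2*k+1) : ℚ)) * (2*k+1) := by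
      exact_mod_cast hnat
    linear_combination ((-1:ℚ)^k) * hq
  rw [Finset.sum_congr rfl key, ← Finset.sum_div]
  have hnum : ∑ k ∈ range m, ((-1:ℚ)^k * (((m+k).choose (2*k) : ℚ) + 2*((m+k).choose (2*k+1) : ℚ)))
      = ((auxA m + 2 * auxB m : ℤ) : ℚ) - (-1)^m := by
    have hA : auxA m + 2 * auxB m
        = (∑ k ∈ range m, ((-1:ℤ)^k * ((m+k).choose (2*k) : ℤ)
            + 2 * ((-1)^k * ((m+k).choose (2*k+1) : ℤ)))) + (-1)^m := by
      unfold auxA auxB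
      rw [Finset.sum_range_succ (fun k => (-1:ℤ)^k * ((m+k).choose (2*k) : ℤ)),
          Finset.sum_range_succ (fun k => (-1:ℤ)^k * ((m+k).choose (2*k+1) : ℤ))]
      rw [show m+m = 2*m from by omega, Nat.choose_self]
      have hz : (2*m).choose (2*m+1) = 0 := Nat.choose_eq_zero_of_lt (by omega)
      rw [hz, Finset.sum_add_distrib, ← Finset.mul_sum]
      push_cast; ring
    rw [hA]
    push_cast
    rw [add_sub_cancel_right]
    exact Finset.sum_congr rfl fun k _ => by ring
  rw [hnum, auxC_val m hm]
  push_cast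
  simp

lemma int_sum (m : ℕ) (hm : m % 3 ≠ 1) :
    ∑ k ∈ range m, (-1:ℤ)^k * ((m+k).choose (2*k) : ℤ)
      * ((∏ j ∈ (range m).erase k, (2*j+1) : ℕ) : ℤ) = 0 := by
  have hq := rat_sum m hm
  have hcast : ((∑ k ∈ range m, (-1:ℤ)^k * ((m+k).choose (2*k) : ℤ)
      * ((∏ j ∈ (range m).erase k, (2*j+1) : ℕ) : ℤ) : ℤ) : ℚ)
      = ((∏ j ∈ range m, (2*j+1) : ℕ) : ℚ)
        * ∑ k ∈ range m, ((-1:ℚ)^k * ((m+k).choose (2*k) : ℚ) / (2*k+1)) := by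
    rw [Finset.mul_sum]
    push_cast
    refine Finset.sum_congr rfl ?_
    intro k hk
    have hDq : (∏ j ∈ range m, (2*(j:ℚ)+1))
        = (2*(k:ℚ)+1) * ∏ j ∈ (range m).erase k, (2*(j:ℚ)+1) :=
      (Finset.mul_prod_erase (range m) (fun j => 2*(j:ℚ)+1) hk).symm
    rw [hDq]
    have hc : (2*(k:ℚ)+1) ≠ 0 := by positivity
    field_simp
  rw [hq, mul_zero] at hcast
  exact_mod_cast hcast

theorem stmt_10 (p : ℕ) (hp : p.Prime) (hp3 : 3 < p) :
    ∑ k ∈ Finset.range ((p - 3) / 2 + 1),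
      ((2 * k).choose k : ZMod (p ^ 2)) * ((2 * k + 1 : ZMod (p ^ 2)) * 16 ^ k)⁻¹ =
    0 := by
  have hp2 : p % 2 = 1 := Nat.odd_iff.mp (hp.odd_of_ne_two (by omega))
  set m := (p - 1) / 2 with hmdef
  have hpm : p = 2 * m + 1 := by omega
  have hm2 : 2 ≤ m := by omega
  have h3 : ¬ (3 ∣ p) := by
    intro h
    rcases (Nat.Prime.eq_one_or_self_of_dvd hp 3 h) with h1 | h1 <;> omega
  have hm3 : m % 3 ≠ 1 := by omega
  have hrange : (p - 3) / 2 + 1 = m := by omega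
  have hunit : ∀ a : ℕ, ¬ p ∣ a → IsUnit ((a : ZMod (p^2))) := by
    intro a ha
    rw [ZMod.isUnit_iff_coprime]
    exact Nat.Coprime.pow_right _ ((Nat.Prime.coprime_iff_not_dvd hp).mpr ha).symm
  have hndvd_lt : ∀ a : ℕ, 0 < a → a < p → ¬ p ∣ a := by
    intro a h0 h1 hdvd
    exact absurd (Nat.le_of_dvd h0 hdvd) (by omega)
  have h16 : ¬ p ∣ 16 := by
    intro h
    have h2 : p ∣ 2^4 := by norm_num; exact h
    have := Nat.le_of_dvd (by norm_num) (hp.dvd_of_dvd_pow h2)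
    omega
  have hchoose_ndvd : ∀ k : ℕ, 2*k < p → ¬ p ∣ (2*k).choose k := by
    intro k hk hdvd
    have hfac := Nat.choose_mul_factorial_mul_factorial (show k ≤ 2*k by omega)
    have hd : p ∣ Nat.factorial (2*k) := by
      rw [← hfac]; exact Dvd.dvd.mul_right (Dvd.dvd.mul_right hdvd _) _
    have := (Nat.Prime.dvd_factorial hp).mp hd
    omega
  have key0 : ((p : ZMod (p^2)))^2 = 0 := by
    have := ZMod.natCast_self (p^2)
    push_cast at this
    exact this
  -- the square identity mod p^2
  have key1 : ∀ k : ℕ, k ≤ m →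
      (m.choose k : ZMod (p^2)) * ((m+k).choose k : ZMod (p^2)) * 16^k * (-1)^k
        = (((2*k).choose k : ℕ) : ZMod (p^2))^2 := by
    intro k
    induction k with
    | zero => intro _; simp
    | succ k ih =>
      intro hk1
      have hk : k ≤ m := by omega
      have IH := ih hk
      have hKu : IsUnit ((k : ZMod (p^2)) + 1) := by
        have := hunit (k+1) (hndvd_lt (k+1) (by omega) (by omega))
        push_cast at this
        exact this
      -- cast facts
      have H1 : (m.choose (k+1) : ZMod (p^2)) * ((k : ZMod (p^2))+1)
          = (m.choose k : ZMod (p^2)) * ((m-k : ℕ) : ZMod (p^2)) := by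
        have h' := congrArg (fun x : ℕ => (x : ZMod (p^2))) (Nat.choose_succ_right_eq m k)
        push_cast at h'
        linear_combination h'
      have H2 : ((m : ZMod (p^2)) + (k : ZMod (p^2)) + 1) * ((m+k).choose k : ZMod (p^2))
          = ((m+k+1).choose (k+1) : ZMod (p^2)) * ((k : ZMod (p^2))+1) := by
        have h' := congrArg (fun x : ℕ => (x : ZMod (p^2))) (Nat.add_one_mul_choose_eq (m+k) k)
        push_cast at h'
        linear_combination h'
      have hsym : (2*k+1).choose k = (2*k+1).choose (k+1) := by
        rw [← Nat.choose_symm (show k+1 ≤ 2*k+1 by omega),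
          show 2*k+1-(k+1) = k from by omega]
      have h4n := Nat.add_one_mul_choose_eq (2*k+1) k
      rw [hsym] at h4n
      have H3 : (2*(k : ZMod (p^2))+2) * ((2*k+1).choose (k+1) : ZMod (p^2))
          = ((2*k+2).choose (k+1) : ZMod (p^2)) * ((k : ZMod (p^2))+1) := by
        have h' := congrArg (fun x : ℕ => (x : ZMod (p^2))) h4n
        push_cast at h'
        linear_combination h'
      have H4 : (2*(k : ZMod (p^2))+1) * ((2*k).choose k : ZMod (p^2))
          = ((2*k+1).choose (k+1) : ZMod (p^2)) * ((k : ZMod (p^2))+1) := by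
        have h' := congrArg (fun x : ℕ => (x : ZMod (p^2))) (Nat.add_one_mul_choose_eq (2*k) k)
        push_cast at h'
        linear_combination h'
      have e1 : (2*(k : ZMod (p^2))+1) + ((m-k : ℕ) : ZMod (p^2)) * 2 = (p : ZMod (p^2)) := by
        have h : (2*k+1) + (m-k)*2 = p := by omega
        have h' := congrArg (fun x : ℕ => (x : ZMod (p^2))) h
        push_cast at h'
        linear_combination h'
      have e2 : (p : ZMod (p^2)) + (2*(k : ZMod (p^2))+1)
          = ((m : ZMod (p^2)) + (k : ZMod (p^2)) + 1) * 2 := by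
        have h : p + (2*k+1) = (m+k+1)*2 := by omega
        have h' := congrArg (fun x : ℕ => (x : ZMod (p^2))) h
        push_cast at h'
        linear_combination h'
      have H5 : ((m-k : ℕ) : ZMod (p^2)) * ((m : ZMod (p^2)) + (k : ZMod (p^2)) + 1) * 4
          = -(2*(k : ZMod (p^2))+1)^2 := by
        linear_combination (2*((m : ZMod (p^2)) + (k : ZMod (p^2)) + 1)) * e1
          - ((p : ZMod (p^2)) - (2*(k : ZMod (p^2))+1)) * e2 + key0
      have big : ((m.choose (k+1) : ZMod (p^2)) * ((m+k+1).choose (k+1) : ZMod (p^2))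
            * 16^(k+1) * (-1)^(k+1)) * (((k : ZMod (p^2))+1)^2 * ((k : ZMod (p^2))+1)^2)
          = (((2*k+2).choose (k+1) : ℕ) : ZMod (p^2))^2
            * (((k : ZMod (p^2))+1)^2 * ((k : ZMod (p^2))+1)^2) := by
        linear_combination
          (-(4 : ZMod (p^2)) * ((k : ZMod (p^2))+1)^2 * (((2*k).choose k : ℕ) : ZMod (p^2))^2) * H5
          + (-16 * ((m-k : ℕ) : ZMod (p^2)) * ((m : ZMod (p^2)) + (k : ZMod (p^2)) + 1)
              * ((k : ZMod (p^2))+1)^2) * IH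
          + ((-16) * 16^k * (-1)^k * ((k : ZMod (p^2))+1)^2
              * ((m+k+1).choose (k+1) : ZMod (p^2)) * ((k : ZMod (p^2))+1)) * H1
          + (-((-16) * 16^k * (-1)^k * ((k : ZMod (p^2))+1)^2 * (m.choose k : ZMod (p^2))
              * ((m-k : ℕ) : ZMod (p^2)))) * H2
          + ((2*(k : ZMod (p^2))+2)^2 * ((2*(k : ZMod (p^2))+1) * ((2*k).choose k : ZMod (p^2))
              + ((2*k+1).choose (k+1) : ZMod (p^2)) * ((k : ZMod (p^2))+1))) * H4
          + (((k : ZMod (p^2))+1)^2 * ((2*(k : ZMod (p^2))+2) * ((2*k+1).choose (k+1) : ZMod (p^2))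
              + ((2*k+2).choose (k+1) : ZMod (p^2)) * ((k : ZMod (p^2))+1))) * H3
      have hcancel := (hKu.pow 2).mul (hKu.pow 2)
      have hres := IsUnit.mul_right_cancel hcancel big
      rw [show m+(k+1) = m+k+1 from by omega, show 2*(k+1) = 2*k+2 from by omega]
      exact hres
  -- trinomial revision
  have tri : ∀ k, k ≤ m → ((m+k).choose (2*k) : ZMod (p^2)) * ((2*k).choose k : ZMod (p^2))
      = ((m+k).choose k : ZMod (p^2)) * (m.choose k : ZMod (p^2)) := by
    intro k hk
    have h := Nat.choose_mul (n := m+k) (show k ≤ 2*k by omega)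
    rw [show m+k-k = m from by omega, show 2*k-k = k from by omega] at h
    have h' := congrArg (fun x : ℕ => (x : ZMod (p^2))) h
    push_cast at h'
    linear_combination h'
  have KEY : ∀ k, k < m → (((2*k).choose k : ℕ) : ZMod (p^2))
      = ((m+k).choose (2*k) : ZMod (p^2)) * 16^k * (-1)^k := by
    intro k hk
    have h1 := key1 k (by omega)
    have h2 := tri k (by omega)
    have hcu : IsUnit (((2*k).choose k : ℕ) : ZMod (p^2)) :=
      hunit _ (hchoose_ndvd k (by omega))
    have hmul : (((m+k).choose (2*k) : ZMod (p^2)) * 16^k * (-1)^k)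
          * (((2*k).choose k : ℕ) : ZMod (p^2))
        = (((2*k).choose k : ℕ) : ZMod (p^2)) * (((2*k).choose k : ℕ) : ZMod (p^2)) := by
      linear_combination (16^k * ((-1 : ZMod (p^2)))^k) * h2 + h1
    exact (IsUnit.mul_right_cancel hcu hmul).symm
  rw [hrange]
  -- multiply the sum by the product of odd numbers
  have hDnd : ¬ p ∣ ∏ j ∈ Finset.range m, (2*j+1) := by
    intro h
    obtain ⟨j, hj, hdvd⟩ := (Prime.dvd_finset_prod_iff (Nat.Prime.prime hp) _).mp h
    have hj' : j < m := Finset.mem_range.mp hj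
    exact hndvd_lt (2*j+1) (by omega) (by omega) hdvd
  have hDu : IsUnit ((∏ j ∈ Finset.range m, (2*j+1) : ℕ) : ZMod (p^2)) := hunit _ hDnd
  have hmul : (∑ k ∈ Finset.range m,
        ((2 * k).choose k : ZMod (p ^ 2)) * ((2 * k + 1 : ZMod (p ^ 2)) * 16 ^ k)⁻¹)
        * ((∏ j ∈ Finset.range m, (2*j+1) : ℕ) : ZMod (p^2))
      = ((∑ k ∈ Finset.range m, (-1:ℤ)^k * ((m+k).choose (2*k) : ℤ)
          * ((∏ j ∈ (Finset.range m).erase k, (2*j+1) : ℕ) : ℤ) : ℤ) : ZMod (p^2)) := by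
    rw [Finset.sum_mul, Int.cast_sum]
    refine Finset.sum_congr rfl ?_
    intro k hk
    have hk' : k < m := Finset.mem_range.mp hk
    have htu : IsUnit ((2 * (k : ZMod (p^2)) + 1) * 16 ^ k) := by
      have h1 : IsUnit ((2 * (k : ZMod (p^2)) + 1)) := by
        have := hunit (2*k+1) (hndvd_lt _ (by omega) (by omega))
        push_cast at this
        exact this
      have h2 : IsUnit ((16 : ZMod (p^2))^k) := by
        have h3 := hunit 16 h16
        have h16' : ((16:ℕ) : ZMod (p^2)) = (16 : ZMod (p^2)) := by norm_cast
        rw [h16'] at h3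
        exact h3.pow k
      exact h1.mul h2
    have hDsplit : ((∏ j ∈ Finset.range m, (2*j+1) : ℕ) : ZMod (p^2))
        = (2 * (k : ZMod (p^2)) + 1) * ((∏ j ∈ (Finset.range m).erase k, (2*j+1) : ℕ) : ZMod (p^2)) := by
      rw [← Finset.mul_prod_erase (Finset.range m) (fun j => 2*j+1) hk]
      push_cast
      ring
    rw [KEY k hk', hDsplit]
    have hrw : ((m+k).choose (2*k) : ZMod (p^2)) * 16^k * (-1)^k
          * ((2 * (k : ZMod (p^2)) + 1) * 16 ^ k)⁻¹
          * ((2 * (k : ZMod (p^2)) + 1) * ((∏ j ∈ (Finset.range m).erase k, (2*j+1) : ℕ) : ZMod (p^2)))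
        = ((m+k).choose (2*k) : ZMod (p^2)) * (-1)^k
          * ((∏ j ∈ (Finset.range m).erase k, (2*j+1) : ℕ) : ZMod (p^2))
          * ((2 * (k : ZMod (p^2)) + 1) * 16 ^ k * ((2 * (k : ZMod (p^2)) + 1) * 16 ^ k)⁻¹) := by
      ring
    rw [hrw, ZMod.mul_inv_of_unit _ htu, mul_one]
    push_cast
    ring
  rw [int_sum m hm3, Int.cast_zero] at hmul
  have := IsUnit.mul_right_cancel hDu (by rw [hmul, zero_mul] :
    (∑ k ∈ Finset.range m,
        ((2 * k).choose k : ZMod (p ^ 2)) * ((2 * k + 1 : ZMod (p ^ 2)) * 16 ^ k)⁻¹)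
        * ((∏ j ∈ Finset.range m, (2*j+1) : ℕ) : ZMod (p^2))
      = 0 * ((∏ j ∈ Finset.range m, (2*j+1) : ℕ) : ZMod (p^2)))
  exact this
end

section
/- Let p be an odd prime. Then the sum over k from 0 to p-1 of C_k² / 16^k is congruent to -3 modulo p, where C_k is the k-th Catalan number. -/
open Finset

-- sum of squares of binomials
lemma aux_sum_sq (n : ℕ) : Nat.centralBinom n = ∑ k ∈ range (n+1), (n.choose k)^2 := by
  rw [Nat.centralBinom, two_mul, Nat.add_choose_eq,
    Finset.Nat.sum_antidiagonal_eq_sum_range_succ_mk]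
  refine Finset.sum_congr rfl fun k hk => ?_
  rw [Nat.choose_symm (by simpa using Nat.lt_succ_iff.mp (mem_range.mp hk)), sq]

-- catalan as difference
lemma aux_catalan_sub (n : ℕ) :
    catalan n = n.centralBinom - (2*n).choose (n+1) := by
  have hle : (2*n).choose (n+1) ≤ n.centralBinom := Nat.choose_le_centralBinom _ _
  have h1 : (n+1) * catalan n = n.centralBinom := succ_mul_catalan_eq_centralBinom n
  have h2 : (2*n).choose (n+1) * (n+1) = n.centralBinom * n := by
    rw [Nat.choose_succ_right_eq]
    congr 1
    omega
  have key : (n+1) * (catalan n + (2*n).choose (n+1)) = (n+1) * n.centralBinom := by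
    rw [Nat.mul_add, h1]
    nlinarith [h2]
  have := Nat.eq_of_mul_eq_mul_left (Nat.succ_pos n) key
  omega

open Finset

lemma aux_cb_mod (p m : ℕ) (hp : p.Prime) (hpm : p = 2*m+1) :
    ∀ k, k < p → (Nat.centralBinom k : ZMod p) = (-4)^k * (m.choose k) := by
  haveI : Fact p.Prime := ⟨hp⟩
  intro k
  induction k with
  | zero => simp [Nat.centralBinom]
  | succ k ih =>
    intro hk
    have ihk := ih (by omega)
    have h0 : ((k:ZMod p) + 1) ≠ 0 := by
      have : (((k+1 : ℕ)) : ZMod p) ≠ 0 := by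
        rw [Ne, ZMod.natCast_eq_zero_iff]
        intro h
        have := Nat.le_of_dvd (by omega) h
        omega
      push_cast at this
      exact this
    have hrec := Nat.succ_mul_centralBinom_succ k
    have hcast : ((k:ZMod p) + 1) * (Nat.centralBinom (k+1) : ZMod p)
        = 2*(2*(k:ZMod p)+1) * (Nat.centralBinom k : ZMod p) := by
      exact_mod_cast congrArg (Nat.cast (R := ZMod p)) hrec
    have hc : (m.choose (k+1) : ZMod p) * ((k:ZMod p)+1)
        = (m.choose k : ZMod p) * ((m:ZMod p) - k) := by
      rcases le_or_gt k m with hkm | hkm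
      · have := Nat.choose_succ_right_eq m k
        have hcast2 : (m.choose (k+1) : ZMod p) * ((k:ZMod p)+1)
            = (m.choose k : ZMod p) * ((m - k : ℕ) : ZMod p) := by
          exact_mod_cast congrArg (Nat.cast (R := ZMod p)) this
        rw [hcast2, Nat.cast_sub hkm]
      · rw [Nat.choose_eq_zero_of_lt hkm, Nat.choose_eq_zero_of_lt (by omega)]
        simp
    apply mul_left_cancel₀ h0
    rw [hcast, ihk]
    have hm : (m:ZMod p) * 2 = (p : ZMod p) - 1 := by
      have h' : ((2*m+1 : ℕ) : ZMod p) = (p : ZMod p) := by exact_mod_cast (congrArg (Nat.cast (R := ZMod p)) hpm.symm)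
      push_cast at h'
      linear_combination h'
    have hp0 : (p : ZMod p) = 0 := ZMod.natCast_self p
    calc 2*(2*(k:ZMod p)+1) * ((-4)^k * (m.choose k : ZMod p))
        = (-4)^k * ((m.choose k : ZMod p) * (-4 * ((m:ZMod p) - k))) := by
          rw [hp0] at hm
          linear_combination (-4:ZMod p)^k * (m.choose k : ZMod p) * 2 * hm
      _ = ((k:ZMod p)+1) * ((-4)^(k+1) * (m.choose (k+1) : ZMod p)) := by
          rw [pow_succ]
          linear_combination (4*(-4:ZMod p)^k) * hc

open Finset

lemma aux_choose_mod (p m : ℕ) (hp : p.Prime) (hpm : p = 2*m+1) (hm : 1 ≤ m) :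
    (((4*m).choose (2*m+1) : ℕ) : ZMod p) = 1 := by
  haveI : Fact p.Prime := ⟨hp⟩
  have h := Nat.add_choose_eq p (2*m-1) (2*m+1)
  rw [Finset.Nat.sum_antidiagonal_eq_sum_range_succ_mk,
    show p + (2*m-1) = 4*m by omega] at h
  rw [h]
  push_cast
  rw [Finset.sum_eq_single_of_mem (2*m+1) (by simp)]
  · rw [← hpm, Nat.choose_self, Nat.sub_self, Nat.choose_zero_right]
    norm_num
  · intro i hi hne
    rcases Nat.eq_zero_or_pos i with h0 | h0
    · subst h0
      have hz : (2*m-1).choose (2*m+1-0) = 0 := Nat.choose_eq_zero_of_lt (by omega)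
      rw [hz]
      simp
    · have : ((p.choose i : ℕ) : ZMod p) = 0 := by
        rw [ZMod.natCast_eq_zero_iff]
        exact Nat.Prime.dvd_choose_self hp (by omega) (by simp at hi; omega)
      rw [this, zero_mul]

lemma aux_catalan_neg_one (p m : ℕ) (hp : p.Prime) (hpm : p = 2*m+1) (hm : 1 ≤ m) :
    ((catalan (2*m) : ℕ) : ZMod p) = -1 := by
  haveI : Fact p.Prime := ⟨hp⟩
  have hle : (2*(2*m)).choose (2*m+1) ≤ Nat.centralBinom (2*m) :=
    Nat.choose_le_centralBinom _ _
  have hcast : ((catalan (2*m) : ℕ) : ZMod p)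
      = (Nat.centralBinom (2*m) : ZMod p) - ((2*(2*m)).choose (2*m+1) : ZMod p) := by
    rw [aux_catalan_sub (2*m), Nat.cast_sub hle]
  have hcb : (Nat.centralBinom (2*m) : ZMod p) = 0 := by
    have h := succ_mul_catalan_eq_centralBinom (2*m)
    have h2 : (((2*m+1) * catalan (2*m) : ℕ) : ZMod p) = (Nat.centralBinom (2*m) : ZMod p) := by
      exact_mod_cast congrArg (Nat.cast (R := ZMod p)) h
    rw [← h2]
    push_cast
    have hp0 : ((2*m+1 : ℕ) : ZMod p) = 0 := by rw [← hpm]; exact ZMod.natCast_self p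
    push_cast at hp0
    rw [show ((2:ZMod p)*m+1) * (catalan (2*m) : ZMod p)
      = ((2:ZMod p)*m+1) * (catalan (2*m) : ZMod p) from rfl]
    linear_combination (catalan (2*m) : ZMod p) * hp0
  rw [hcast, hcb, show 2*(2*m) = 4*m by ring, aux_choose_mod p m hp hpm hm]
  ring

theorem stmt_18 (p : ℕ) (hp : p.Prime) (hodd : Odd p) :
    ∑ k ∈ Finset.range p, (catalan k : ZMod p) ^ 2 * ((16 : ZMod p) ^ k)⁻¹ =
    -3 := by
  haveI : Fact p.Prime := ⟨hp⟩
  obtain ⟨m, hpm⟩ : ∃ m, p = 2*m+1 := hodd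
  have hm1 : 1 ≤ m := by
    have := hp.two_le
    omega
  have h16 : (16 : ZMod p) ≠ 0 := by
    have h : ((16:ℕ) : ZMod p) ≠ 0 := by
      rw [Ne, ZMod.natCast_eq_zero_iff]
      intro hd
      have h2 : p ∣ 2 := hp.dvd_of_dvd_pow (show p ∣ 2^4 by norm_num at hd ⊢; exact hd)
      have := Nat.le_of_dvd (by norm_num) h2
      omega
    simpa using h
  -- per-term formula for k < 2*m
  have hterm : ∀ k < 2*m, (catalan k : ZMod p) ^ 2 * ((16 : ZMod p) ^ k)⁻¹
      = 4 * (((m+1).choose (k+1) : ℕ) : ZMod p)^2 := by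
    intro k hk
    have hk1 : ((k:ZMod p) + 1) ≠ 0 := by
      have h : (((k+1 : ℕ)) : ZMod p) ≠ 0 := by
        rw [Ne, ZMod.natCast_eq_zero_iff]
        intro h
        have := Nat.le_of_dvd (by omega) h
        omega
      push_cast at h
      exact h
    have hcb := aux_cb_mod p m hp hpm k (by omega)
    have hcat : (catalan k : ZMod p) * ((k:ZMod p)+1) = (Nat.centralBinom k : ZMod p) := by
      have h := succ_mul_catalan_eq_centralBinom k
      have h2 : (((k+1) * catalan k : ℕ) : ZMod p) = (Nat.centralBinom k : ZMod p) := by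
        exact_mod_cast congrArg (Nat.cast (R := ZMod p)) h
      push_cast at h2
      linear_combination h2
    have e1 : (catalan k : ZMod p) = (-4)^k * (m.choose k : ZMod p) * ((k:ZMod p)+1)⁻¹ := by
      rw [eq_mul_inv_iff_mul_eq₀ hk1, hcat, hcb]
    have h2m : (2:ZMod p) * ((m:ZMod p)+1) = 1 := by
      have hp0 : ((2*m+1 : ℕ) : ZMod p) = 0 := by rw [← hpm]; exact ZMod.natCast_self p
      push_cast at hp0
      linear_combination hp0
    have e2 : (m.choose k : ZMod p) * ((k:ZMod p)+1)⁻¹ = 2 * (((m+1).choose (k+1) : ℕ) : ZMod p) := by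
      have hid : ((m:ZMod p)+1) * (m.choose k : ZMod p)
          = (((m+1).choose (k+1) : ℕ) : ZMod p) * ((k:ZMod p)+1) := by
        have h := Nat.add_one_mul_choose_eq m k
        have h2 : (((m+1) * m.choose k : ℕ) : ZMod p) = (((m+1).choose (k+1) * (k+1) : ℕ) : ZMod p) := by
          exact_mod_cast congrArg (Nat.cast (R := ZMod p)) h
        push_cast at h2
        linear_combination h2
      rw [mul_inv_eq_iff_eq_mul₀ hk1]
      linear_combination 2 * hid - (m.choose k : ZMod p) * h2m
    have h16k : ((16:ZMod p)^k) ≠ 0 := pow_ne_zero _ h16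
    have hsq : ((-4:ZMod p))^k * ((-4:ZMod p))^k = (16:ZMod p)^k := by
      rw [← mul_pow]; norm_num
    calc (catalan k : ZMod p) ^ 2 * ((16 : ZMod p) ^ k)⁻¹
        = ((-4:ZMod p)^k * (-4:ZMod p)^k) * ((16:ZMod p)^k)⁻¹
            * ((m.choose k : ZMod p) * ((k:ZMod p)+1)⁻¹)^2 := by rw [e1]; ring
      _ = ((m.choose k : ZMod p) * ((k:ZMod p)+1)⁻¹)^2 := by
            rw [hsq, mul_inv_cancel₀ h16k, one_mul]
      _ = 4 * (((m+1).choose (k+1) : ℕ) : ZMod p)^2 := by rw [e2]; ring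
  -- split off the last term
  subst hpm
  rw [Finset.sum_range_succ]
  have hsum1 : ∑ k ∈ Finset.range (2*m), (catalan k : ZMod (2*m+1)) ^ 2 * ((16 : ZMod (2*m+1)) ^ k)⁻¹
      = 4 * ∑ k ∈ Finset.range (2*m), (((m+1).choose (k+1) : ℕ) : ZMod (2*m+1))^2 := by
    rw [Finset.mul_sum]
    exact Finset.sum_congr rfl fun k hk => hterm k (Finset.mem_range.mp hk)
  have hshift := Finset.sum_range_succ' (fun j => (((m+1).choose j : ℕ) : ZMod (2*m+1))^2) (2*m)
  have hfull : ∑ j ∈ Finset.range (2*m+1), (((m+1).choose j : ℕ) : ZMod (2*m+1))^2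
      = (Nat.centralBinom (m+1) : ZMod (2*m+1)) := by
    rw [show ∑ j ∈ Finset.range (2*m+1), (((m+1).choose j : ℕ) : ZMod (2*m+1))^2
        = ∑ j ∈ Finset.range (m+2), (((m+1).choose j : ℕ) : ZMod (2*m+1))^2 from
      (Finset.sum_subset (Finset.range_subset_range.mpr (by omega)) (fun x hx hnx => by
        rw [Nat.choose_eq_zero_of_lt (by simp at hx hnx ⊢; omega)]
        simp)).symm]
    rw [aux_sum_sq (m+1)]
    push_cast
    rfl
  have hcb0 : (Nat.centralBinom (m+1) : ZMod (2*m+1)) = 0 := by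
    rw [Nat.centralBinom, show 2*(m+1) = (2*m+1)+1 by ring, Nat.choose_succ_succ]
    push_cast
    have d1 : (2*m+1) ∣ (2*m+1).choose m := Nat.Prime.dvd_choose_self hp (by omega) (by omega)
    have d2 : (2*m+1) ∣ (2*m+1).choose (m+1) := Nat.Prime.dvd_choose_self hp (by omega) (by omega)
    rw [(ZMod.natCast_eq_zero_iff _ _).mpr d1, (ZMod.natCast_eq_zero_iff _ _).mpr d2]
    ring
  have hg0 : (((m+1).choose 0 : ℕ) : ZMod (2*m+1))^2 = 1 := by simp
  have hsum2 : ∑ k ∈ Finset.range (2*m), (((m+1).choose (k+1) : ℕ) : ZMod (2*m+1))^2 = -1 := by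
    have := hshift
    rw [hfull, hcb0, hg0] at this
    linear_combination -this
  have hcat2m : ((catalan (2*m) : ℕ) : ZMod (2*m+1)) = -1 := aux_catalan_neg_one _ m hp rfl hm1
  have h16p : (16:ZMod (2*m+1))^(2*m) = 1 := by
    have h := ZMod.pow_card_sub_one_eq_one (p := 2*m+1) h16
    simpa using h
  rw [hsum1, hsum2, hcat2m, h16p]
  norm_num
end

section
/- Let p be a prime with p ≡ 3 (mod 4). Then the sum over k from 0 to p-1 of k³ * binomial(2k,k)³ / 64^k is congruent to -(1/640) * (((p+1)/4)!)^(-4) modulo p; and if instead p ≡ 1 (mod 4), the sum is congruent to 0 modulo p. -/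
set_option maxRecDepth 10000
set_option maxHeartbeats 2000000

open Finset

lemma chooseA (n k : ℕ) : ((n.choose (k+1) : ℚ)) * ((k:ℚ)+1) = (n.choose k : ℚ) * ((n:ℚ) - k) := by
  rcases le_or_gt k n with h | h
  · have := Nat.choose_succ_right_eq n k
    have h2 : ((n.choose (k+1) * (k+1) : ℕ) : ℚ) = ((n.choose k * (n - k) : ℕ) : ℚ) := by
      exact_mod_cast congrArg (Nat.cast : ℕ → ℚ) this
    push_cast [Nat.cast_sub h] at h2
    linarith [h2]
  · rw [Nat.choose_eq_zero_of_lt h, Nat.choose_eq_zero_of_lt (by omega)]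
    simp

lemma chooseB (n k : ℕ) : ((n:ℚ)+1) * (n.choose k : ℚ) = ((n+1).choose k : ℚ) * ((n:ℚ)+1-k) := by
  cases k with
  | zero => simp
  | succ j =>
    have ha := chooseA (n+1) (j+1)
    have h2 : ((n+1) * n.choose (j+1) : ℕ) = ((n+1).choose (j+2) * (j+2) : ℕ) :=
      Nat.add_one_mul_choose_eq n (j+1)
    have h2' : ((n:ℚ)+1) * (n.choose (j+1) : ℚ) = ((n+1).choose (j+2) : ℚ) * ((j:ℚ)+2) := by
      exact_mod_cast congrArg (Nat.cast : ℕ → ℚ) h2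
    push_cast at ha h2' ⊢
    linear_combination h2' + ha



def Pq (x y : ℚ) : ℚ :=
  (-24)*y^3 + 132*y^4 + (-306)*y^5 + 387*y^6 + (-288)*y^7 + 126*y^8 + (-30)*y^9 + 3*y^10 +
  (-156)*x*y^3 + 792*x*y^4 + (-1683)*x*y^5 + 1935*x*y^6 + (-1296)*x*y^7 + 504*x*y^8 +
  (-105)*x*y^9 + 9*x*y^10 + (-342)*x^2*y^3 + 1557*x^2*y^4 + (-2889)*x^2*y^5 + 2790*x^2*y^6 +
  (-1476)*x^2*y^7 + 405*x^2*y^8 + (-45)*x^2*y^9 + (-340)*x^3*y^3 + 1365*x^3*y^4 +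
  (-2142)*x^3*y^5 + 1636*x^3*y^6 + (-606)*x^3*y^7 + 87*x^3*y^8 + (-158)*x^4*y^3 +
  552*x^4*y^4 + (-708)*x^4*y^5 + 392*x^4*y^6 + (-78)*x^4*y^7 + (-28)*x^5*y^3 +
  84*x^5*y^4 + (-84)*x^5*y^5 + 28*x^5*y^6

def a0q (x : ℚ) : ℚ := -3*(x+1)^3*(x+2)^3*(3*x-1)*(3*x+1)
def a2q (x : ℚ) : ℚ := -x^3*(x+1)^5

def fq (m k : ℕ) : ℚ := (-1)^k * (k:ℚ)^3 * (m.choose k : ℚ)^3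
def Gq (m k : ℕ) : ℚ := (-1)^k * (((m+2).choose k : ℚ))^3 * Pq (m:ℚ) (k:ℚ)

lemma local_id (m k : ℕ) :
    a0q m * fq m k + a2q m * fq (m+2) k = Gq m (k+1) - Gq m k := by
  have hB1 := chooseB m k
  have hB2 := chooseB (m+1) k
  have hA := chooseA (m+2) k
  have h1 : (m.choose k : ℚ) * (((m:ℚ)+1)*((m:ℚ)+2)) =
      ((m+2).choose k : ℚ) * (((m:ℚ)+2-k)*((m:ℚ)+1-k)) := by
    push_cast at hB1 hB2 ⊢
    linear_combination ((m:ℚ)+2) * hB1 + ((m:ℚ)+1-(k:ℚ)) * hB2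
  have h3 : (((m+2).choose (k+1) : ℚ)) * ((k:ℚ)+1) =
      ((m+2).choose k : ℚ) * ((m:ℚ)+2-k) := by
    push_cast at hA ⊢
    linear_combination hA
  have h1c : (m.choose k : ℚ)^3 * (((m:ℚ)+1)*((m:ℚ)+2))^3 =
      ((m+2).choose k : ℚ)^3 * (((m:ℚ)+2-k)*((m:ℚ)+1-k))^3 := by
    rw [← mul_pow, ← mul_pow, h1]
  have h3c : (((m+2).choose (k+1) : ℚ))^3 * ((k:ℚ)+1)^3 =
      ((m+2).choose k : ℚ)^3 * ((m:ℚ)+2-k)^3 := by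
    rw [← mul_pow, ← mul_pow, h3]
  have hD : (((m:ℚ)+1)*((m:ℚ)+2)*((k:ℚ)+1))^3 ≠ 0 := by positivity
  apply mul_left_cancel₀ hD
  simp only [fq, Gq, Pq, a0q, a2q]
  push_cast
  linear_combination
    ((-1:ℚ)^k * (-3*((m:ℚ)+1)^3*((m:ℚ)+2)^3*(3*(m:ℚ)-1)*(3*(m:ℚ)+1)) * (k:ℚ)^3 * ((k:ℚ)+1)^3) * h1c +
    ((-1:ℚ)^k * ((-24)*((k:ℚ)+1)^3 + 132*((k:ℚ)+1)^4 + (-306)*((k:ℚ)+1)^5 + 387*((k:ℚ)+1)^6 + (-288)*((k:ℚ)+1)^7 + 126*((k:ℚ)+1)^8 + (-30)*((k:ℚ)+1)^9 + 3*((k:ℚ)+1)^10 + (-156)*(m:ℚ)*((k:ℚ)+1)^3 + 792*(m:ℚ)*((k:ℚ)+1)^4 + (-1683)*(m:ℚ)*((k:ℚ)+1)^5 + 1935*(m:ℚ)*((k:ℚ)+1)^6 + (-1296)*(m:ℚ)*((k:ℚ)+1)^7 + 504*(m:ℚ)*((k:ℚ)+1)^8 + (-105)*(m:ℚ)*((k:ℚ)+1)^9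 + 9*(m:ℚ)*((k:ℚ)+1)^10 + (-342)*(m:ℚ)^2*((k:ℚ)+1)^3 + 1557*(m:ℚ)^2*((k:ℚ)+1)^4 + (-2889)*(m:ℚ)^2*((k:ℚ)+1)^5 + 2790*(m:ℚ)^2*((k:ℚ)+1)^6 + (-1476)*(m:ℚ)^2*((k:ℚ)+1)^7 + 405*(m:ℚ)^2*((k:ℚ)+1)^8 + (-45)*(m:ℚ)^2*((k:ℚ)+1)^9 + (-340)*(m:ℚ)^3*((k:ℚ)+1)^3 + 1365*(m:ℚ)^3*((k:ℚ)+1)^4 + (-2142)*(m:ℚ)^3*((k:ℚ)+1)^5 + 1636*(m:ℚ)^3*((k:ℚ)+1)^6 + (-606)*(m:ℚ)^3*((k:ℚ)+1)^7 + 87*(m:ℚ)^3*((k:ℚ)+1)^8 + (-158)*(m:ℚ)^4*((k:ℚ)+1)^3 + 552*(m:ℚ)^4*((k:ℚ)+1)^4 + (-708)*(m:ℚ)^4*((k:ℚ)+1)^5 + 392*(m:ℚ)^4*((k:ℚ)+1)^6 + (-78)*(m:ℚ)^4*((k:ℚ)+1)^7 + (-28)*(m:ℚ)^5*((k:ℚ)+1)^3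 + 84*(m:ℚ)^5*((k:ℚ)+1)^4 + (-84)*(m:ℚ)^5*((k:ℚ)+1)^5 + 28*(m:ℚ)^5*((k:ℚ)+1)^6) * (((m:ℚ)+1)*((m:ℚ)+2))^3) * h3c


def Tq (m : ℕ) : ℚ := ∑ k ∈ Finset.range (m+1), fq m k

lemma fq_zero {m k : ℕ} (h : m < k) : fq m k = 0 := by
  simp [fq, Nat.choose_eq_zero_of_lt h]

lemma sum_pad (m N : ℕ) (h : m+1 ≤ N) : ∑ k ∈ Finset.range N, fq m k = Tq m := by
  rw [Tq, ← Finset.sum_subset (Finset.range_subset_range.2 h)]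
  intro x hx hnx
  simp only [Finset.mem_range, not_lt] at hnx
  exact fq_zero (by omega)

lemma recur (m : ℕ) : a0q m * Tq m + a2q m * Tq (m+2) = 0 := by
  have h1 : ∑ k ∈ Finset.range (m+5), (a0q m * fq m k + a2q m * fq (m+2) k)
      = a0q m * Tq m + a2q m * Tq (m+2) := by
    rw [Finset.sum_add_distrib, ← Finset.mul_sum, ← Finset.mul_sum,
      sum_pad m (m+5) (by omega), sum_pad (m+2) (m+5) (by omega)]
  rw [← h1]
  have h2 : ∀ k ∈ Finset.range (m+5), a0q m * fq m k + a2q m * fq (m+2) k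
      = Gq m (k+1) - Gq m k := fun k _ => local_id m k
  rw [Finset.sum_congr rfl h2, Finset.sum_range_sub (Gq m)]
  have hend : Gq m (m+5) = 0 := by
    simp [Gq, Nat.choose_eq_zero_of_lt (by omega : m+2 < m+5)]
  have h0 : Gq m 0 = 0 := by
    simp [Gq, Pq]
  rw [hend, h0, sub_zero]

lemma Teven (n : ℕ) : Tq (2*n) = 0 := by
  induction n with
  | zero => simp [Tq, Finset.sum_range_succ, fq]
  | succ j ih =>
    have h2 : 2*(j+1) = 2*j+2 := by omega
    rw [h2]
    rcases Nat.eq_zero_or_pos j with hj | hj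
    · subst hj
      norm_num [Tq, Finset.sum_range_succ, fq]
    · have hr := recur (2*j)
      rw [ih, mul_zero, zero_add] at hr
      have hx : (0:ℚ) < ((2*j:ℕ):ℚ) := by exact_mod_cast by omega
      have ha2 : a2q ((2*j:ℕ):ℚ) ≠ 0 := by
        simp only [a2q]
        apply ne_of_lt
        nlinarith [pow_pos hx 3, pow_pos (by linarith : (0:ℚ) < ((2*j:ℕ):ℚ)+1) 5]
      rcases mul_eq_zero.1 hr with h | h
      · exact absurd h ha2
      · exact h

lemma Todd (n : ℕ) : Tq (2*n+1) * (Nat.factorial n : ℚ)^3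
    = (-1)^(n+1) * (2*(n:ℚ)+1)^3 * ((Nat.factorial (3*n)) : ℚ) := by
  induction n with
  | zero => norm_num [Tq, Finset.sum_range_succ, fq, Nat.factorial]
  | succ j ih =>
    have hr := recur (2*j+1)
    have e : 2*j+1+2 = 2*j+3 := by omega
    rw [e] at hr
    have hx : (0:ℚ) < ((2*j+1:ℕ):ℚ) := by exact_mod_cast by omega
    have ha2 : a2q ((2*j+1:ℕ):ℚ) ≠ 0 := by
      simp only [a2q]
      apply ne_of_lt
      nlinarith [pow_pos hx 3, pow_pos (by linarith : (0:ℚ) < ((2*j+1:ℕ):ℚ)+1) 5]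
    have hidx : 2*(j+1)+1 = 2*j+3 := by omega
    rw [hidx]
    apply mul_left_cancel₀ ha2
    have hfac3 : ((Nat.factorial (3*(j+1))) : ℚ)
        = (3*(j:ℚ)+1)*(3*(j:ℚ)+2)*(3*(j:ℚ)+3) * ((Nat.factorial (3*j)) : ℚ) := by
      have h3 : 3*(j+1) = (3*j+1)+1+1 := by omega
      rw [h3]
      push_cast [Nat.factorial_succ]
      ring
    have hfacn : ((Nat.factorial (j+1)) : ℚ) = ((j:ℚ)+1) * (Nat.factorial j : ℚ) := by
      push_cast [Nat.factorial_succ]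
      ring
    rw [hfac3, hfacn]
    simp only [a0q, a2q] at hr ⊢
    push_cast at hr ⊢
    linear_combination (((j:ℚ)+1)^3 * ((Nat.factorial j : ℚ))^3) * hr +
      (3*(2*(j:ℚ)+2)^3*(2*(j:ℚ)+3)^3*(3*(2*(j:ℚ)+1)-1)*(3*(2*(j:ℚ)+1)+1)*((j:ℚ)+1)^3) * ih


lemma Todd_int (n : ℕ) :
    (∑ k ∈ Finset.range (2*n+2), (-1:ℤ)^k * (k:ℤ)^3 * ((2*n+1).choose k : ℤ)^3)
      * (Nat.factorial n : ℤ)^3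
    = (-1)^(n+1) * (2*(n:ℤ)+1)^3 * ((Nat.factorial (3*n)) : ℤ) := by
  have h := Todd n
  have hc : ((∑ k ∈ Finset.range (2*n+2), (-1:ℤ)^k * (k:ℤ)^3 * ((2*n+1).choose k : ℤ)^3 : ℤ) : ℚ)
      = Tq (2*n+1) := by
    rw [Tq]
    push_cast
    rfl
  exact_mod_cast (by rw [hc]; exact_mod_cast h :
    ((∑ k ∈ Finset.range (2*n+2), (-1:ℤ)^k * (k:ℤ)^3 * ((2*n+1).choose k : ℤ)^3 : ℤ) : ℚ)
      * (Nat.factorial n : ℚ)^3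
    = (-1)^(n+1) * (2*(n:ℚ)+1)^3 * ((Nat.factorial (3*n)) : ℚ))

lemma Teven_int (n : ℕ) :
    (∑ k ∈ Finset.range (2*n+1), (-1:ℤ)^k * (k:ℤ)^3 * ((2*n).choose k : ℤ)^3) = 0 := by
  have h := Teven n
  have hc : ((∑ k ∈ Finset.range (2*n+1), (-1:ℤ)^k * (k:ℤ)^3 * ((2*n).choose k : ℤ)^3 : ℤ) : ℚ)
      = Tq (2*n) := by
    rw [Tq]
    push_cast
    rfl
  exact_mod_cast hc.trans h

section ZModPart

variable {p : ℕ} [hfp : Fact p.Prime]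

lemma cast_ne_zero_of_lt {a : ℕ} (ha : 0 < a) (hap : a < p) : (a : ZMod p) ≠ 0 := by
  rw [Ne, ZMod.natCast_eq_zero_iff]
  intro hdvd
  have := Nat.le_of_dvd ha hdvd
  omega

lemma central_eq {m : ℕ} (hm : 2*m+1 = p) (k : ℕ) (hk : k ≤ m) :
    (((2*k).choose k : ℕ) : ZMod p) = (-4)^k * ((m.choose k : ℕ) : ZMod p) := by
  induction k with
  | zero => simp
  | succ j ih =>
    have hj : j ≤ m := by omega
    have hp0 : 2 * (m : ZMod p) + 1 = 0 := by
      have := congrArg (Nat.cast : ℕ → ZMod p) hm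
      push_cast [ZMod.natCast_self] at this
      linear_combination this
    have hu : ((j+1 : ℕ) : ZMod p) ≠ 0 := cast_ne_zero_of_lt (by omega) (by omega)
    apply mul_right_cancel₀ hu
    have hC : ((j+1) * Nat.centralBinom (j+1) : ℕ) = (2*(2*j+1) * Nat.centralBinom j : ℕ) :=
      Nat.succ_mul_centralBinom_succ j
    have hC' : (((2*(j+1)).choose (j+1) : ℕ) : ZMod p) * ((j+1 : ℕ) : ZMod p)
        = 2*(2*(j:ZMod p)+1) * (((2*j).choose j : ℕ) : ZMod p) := by
      have h := congrArg (Nat.cast : ℕ → ZMod p) hC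
      rw [Nat.centralBinom_eq_two_mul_choose, Nat.centralBinom_eq_two_mul_choose] at h
      push_cast at h ⊢
      linear_combination h
    have hR : ((m.choose (j+1) : ℕ) : ZMod p) * ((j+1 : ℕ) : ZMod p)
        = ((m.choose j : ℕ) : ZMod p) * ((m : ZMod p) - j) := by
      have hn := Nat.choose_succ_right_eq m j
      have h := congrArg (Nat.cast : ℕ → ZMod p) hn
      push_cast [Nat.cast_sub hj] at h ⊢
      linear_combination h
    rw [hC', ih hj]
    push_cast at hR ⊢
    linear_combination (-((-4:ZMod p))^(j+1)) * hR +
      (2 * (-4:ZMod p)^j * ((m.choose j : ℕ) : ZMod p)) * hp0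

lemma central_tail {m k : ℕ} (hm : 2*m+1 = p) (hk1 : m < k) (hk2 : k < p) :
    (((2*k).choose k : ℕ) : ZMod p) = 0 := by
  rw [ZMod.natCast_eq_zero_iff]
  have hp : p.Prime := hfp.out
  have hdvd : p ∣ Nat.factorial (2*k) := (Nat.Prime.dvd_factorial hp).2 (by omega)
  have hfac : (2*k).choose k * Nat.factorial k * Nat.factorial k = Nat.factorial (2*k) := by
    have := Nat.choose_mul_factorial_mul_factorial (show k ≤ 2*k by omega)
    rwa [show 2*k - k = k by omega] at this
  rw [← hfac] at hdvd
  have hnk : ¬ p ∣ Nat.factorial k := by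
    intro h
    have := (Nat.Prime.dvd_factorial hp).1 h
    omega
  rcases (Nat.Prime.dvd_mul hp).1 hdvd with h | h
  · rcases (Nat.Prime.dvd_mul hp).1 h with h2 | h2
    · exact h2
    · exact absurd h2 hnk
  · exact absurd h hnk

lemma wilson_chain (j : ℕ) (hj : j ≤ p - 1) :
    ((Nat.factorial (p-1-j) : ℕ) : ZMod p) * ((Nat.factorial j : ℕ) : ZMod p) * (-1)^j = -1 := by
  have hp : p.Prime := hfp.out
  have hp2 : 2 ≤ p := hp.two_le
  induction j with
  | zero => simpa using ZMod.wilsons_lemma p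
  | succ i ih =>
    have hi : i ≤ p - 1 := by omega
    have hstep : p - 1 - i = (p - 1 - (i+1)) + 1 := by omega
    have hih := ih hi
    rw [hstep, Nat.factorial_succ] at hih
    have hcast : ((p - 1 - (i+1) : ℕ) : ZMod p) + 1 = -((i:ZMod p) + 1) := by
      have h1 : ((p - 1 - (i+1)) + 1) + (i + 1) = p := by omega
      have h := congrArg (Nat.cast : ℕ → ZMod p) h1
      push_cast [ZMod.natCast_self] at h
      linear_combination h
    rw [Nat.factorial_succ]
    push_cast at hih ⊢
    linear_combination hih + (-(((Nat.factorial (p-1-(i+1)) : ℕ) : ZMod p) *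
      ((Nat.factorial i : ℕ) : ZMod p) * (-1:ZMod p)^i)) * hcast

end ZModPart

lemma fact_cast_ne_zero {p : ℕ} [hfp : Fact p.Prime] {a : ℕ} (h : a < p) :
    ((Nat.factorial a : ℕ) : ZMod p) ≠ 0 := by
  rw [Ne, ZMod.natCast_eq_zero_iff]
  intro hdvd
  have := (Nat.Prime.dvd_factorial hfp.out).1 hdvd
  omega

theorem stmt_19 (p : ℕ) (hp : p.Prime) (hodd : Odd p) :
    (p % 4 = 3 →
      ∑ k ∈ Finset.range p,
          (k : ZMod p) ^ 3 * ((2 * k).choose k : ZMod p) ^ 3 * ((64 : ZMod p) ^ k)⁻¹ =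
        -((640 : ZMod p)⁻¹ * ((((p + 1) / 4).factorial : ZMod p)⁻¹) ^ 4)) ∧
    (p % 4 = 1 →
      ∑ k ∈ Finset.range p,
          (k : ZMod p) ^ 3 * ((2 * k).choose k : ZMod p) ^ 3 * ((64 : ZMod p) ^ k)⁻¹ =
        0) := by
  haveI : Fact p.Prime := ⟨hp⟩
  have hp2 : 2 ≤ p := hp.two_le
  have hpodd : p % 2 = 1 := Nat.odd_iff.mp hodd
  obtain ⟨m, hm⟩ : ∃ m, 2*m+1 = p := ⟨p/2, by omega⟩
  have h2ne : (2 : ZMod p) ≠ 0 := by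
    have h := cast_ne_zero_of_lt (p := p) (a := 2) (by norm_num) (by omega)
    push_cast at h
    exact h
  have h64 : (64 : ZMod p) ≠ 0 := by
    have h : (64 : ZMod p) = 2^6 := by norm_num
    rw [h]
    exact pow_ne_zero _ h2ne
  have hconv : ∑ k ∈ Finset.range p,
      (k : ZMod p) ^ 3 * ((2 * k).choose k : ZMod p) ^ 3 * ((64 : ZMod p) ^ k)⁻¹
      = ∑ k ∈ Finset.range (m+1),
          (-1:ZMod p)^k * (k:ZMod p)^3 * ((m.choose k : ℕ) : ZMod p)^3 := by
    have h1 : ∀ k ∈ Finset.range p,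
        (k : ZMod p) ^ 3 * ((2 * k).choose k : ZMod p) ^ 3 * ((64 : ZMod p) ^ k)⁻¹
        = (-1:ZMod p)^k * (k:ZMod p)^3 * ((m.choose k : ℕ) : ZMod p)^3 := by
      intro k hk
      rcases le_or_gt k m with hkm | hkm
      · rw [central_eq hm k hkm, mul_pow]
        have key : ((-4 : ZMod p)^k)^3 = (-1)^k * 64^k := by
          rw [← pow_mul, mul_comm k 3, pow_mul]
          norm_num
          rw [show (-64 : ZMod p) = (-1) * 64 by norm_num, mul_pow]
        rw [key]
        have hcancel : (64:ZMod p)^k * ((64:ZMod p)^k)⁻¹ = 1 :=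
          mul_inv_cancel₀ (pow_ne_zero _ h64)
        linear_combination ((k:ZMod p)^3 * (-1:ZMod p)^k * ((m.choose k : ℕ) : ZMod p)^3) * hcancel
      · rw [central_tail hm hkm (Finset.mem_range.1 hk), Nat.choose_eq_zero_of_lt hkm]
        simp
    rw [Finset.sum_congr rfl h1]
    refine (Finset.sum_subset (Finset.range_subset_range.2 (by omega)) ?_).symm
    intro k hk hnk
    simp only [Finset.mem_range, not_lt] at hnk
    rw [Nat.choose_eq_zero_of_lt (by omega)]
    simp
  constructor
  · -- p ≡ 3 mod 4
    intro h4
    obtain ⟨n, hpn⟩ : ∃ n, p = 4*n+3 := ⟨p/4, by omega⟩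
    have hmn : m = 2*n+1 := by omega
    subst hmn
    have hq : (p + 1) / 4 = n+1 := by omega
    rw [hconv, hq]
    rw [show 2*n+1+1 = 2*n+2 from rfl]
    -- cast Todd_int to ZMod p
    have hz : (∑ k ∈ Finset.range (2*n+2),
          (-1:ZMod p)^k * (k:ZMod p)^3 * (((2*n+1).choose k : ℕ) : ZMod p)^3)
        * ((Nat.factorial n : ℕ) : ZMod p)^3
        = (-1)^(n+1) * (2*(n:ZMod p)+1)^3 * ((Nat.factorial (3*n) : ℕ) : ZMod p) := by
      have h := congrArg (Int.cast : ℤ → ZMod p) (Todd_int n)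
      push_cast at h
      exact_mod_cast h
    have hW := wilson_chain (p := p) (n+2) (by omega)
    rw [show p - 1 - (n+2) = 3*n by omega] at hW
    have hf3 : ((Nat.factorial (n+2) : ℕ) : ZMod p)
        = ((n:ZMod p)+2) * (((n:ZMod p)+1) * ((Nat.factorial n : ℕ) : ZMod p)) := by
      push_cast [Nat.factorial_succ]
      ring
    rw [hf3] at hW
    have hf2 : ((Nat.factorial (n+1) : ℕ) : ZMod p)
        = ((n:ZMod p)+1) * ((Nat.factorial n : ℕ) : ZMod p) := by
      push_cast [Nat.factorial_succ]
      ring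
    have hp0 : 4*(n:ZMod p)+3 = 0 := by
      have h : ((4*n+3 : ℕ) : ZMod p) = 0 := by rw [← hpn]; exact ZMod.natCast_self p
      push_cast at h
      linear_combination h
    have hF2ne : ((Nat.factorial (n+1) : ℕ) : ZMod p) ≠ 0 := fact_cast_ne_zero (by omega)
    have h5ne : (5 : ZMod p) ≠ 0 := by
      have h : (5 : ZMod p) = ((5:ℕ) : ZMod p) := by push_cast; ring
      rw [h, Ne, ZMod.natCast_eq_zero_iff]
      intro hdvd
      have := (Nat.prime_dvd_prime_iff_eq hp (by norm_num)).1 hdvd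
      omega
    have h640 : (640 : ZMod p) ≠ 0 := by
      have h : (640 : ZMod p) = 2^7 * 5 := by norm_num
      rw [h]
      exact mul_ne_zero (pow_ne_zero _ h2ne) h5ne
    have hGoal : (∑ k ∈ Finset.range (2*n+2),
          (-1:ZMod p)^k * (k:ZMod p)^3 * (((2*n+1).choose k : ℕ) : ZMod p)^3)
        * ((640:ZMod p) * ((Nat.factorial (n+1) : ℕ) : ZMod p)^4) = -1 := by
      have hc2 : (((n:ZMod p)+2) * ((n:ZMod p)+1) * 2048) ≠ 0 := by
        have ha : ((n:ZMod p)+2) ≠ 0 := by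
          have h := cast_ne_zero_of_lt (p := p) (a := n+2) (by omega) (by omega)
          push_cast at h
          exact h
        have hb : ((n:ZMod p)+1) ≠ 0 := by
          have h := cast_ne_zero_of_lt (p := p) (a := n+1) (by omega) (by omega)
          push_cast at h
          exact h
        have hc : (2048 : ZMod p) ≠ 0 := by
          have h : (2048 : ZMod p) = 2^11 := by norm_num
          rw [h]
          exact pow_ne_zero _ h2ne
        exact mul_ne_zero (mul_ne_zero ha hb) hc
      apply mul_right_cancel₀ hc2
      rw [hf2]
      linear_combination
        (2048*640*((n:ZMod p)+1)^5*((n:ZMod p)+2)*((Nat.factorial n : ℕ) : ZMod p)) * hz +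
        (-(2048*640*((n:ZMod p)+1)^4*(2*(n:ZMod p)+1)^3)) * hW +
        (2621440*(n:ZMod p)^6 + 12451840*(n:ZMod p)^5 + 24084480*(n:ZMod p)^4 +
          24207360*(n:ZMod p)^3 + 13301760*(n:ZMod p)^2 + 3786752*(n:ZMod p) + 438272) * hp0
    have hne : (640:ZMod p) * ((Nat.factorial (n+1) : ℕ) : ZMod p)^4 ≠ 0 :=
      mul_ne_zero h640 (pow_ne_zero _ hF2ne)
    have hfin : (∑ k ∈ Finset.range (2*n+2),
          (-1:ZMod p)^k * (k:ZMod p)^3 * (((2*n+1).choose k : ℕ) : ZMod p)^3)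
        = -1 / ((640:ZMod p) * ((Nat.factorial (n+1) : ℕ) : ZMod p)^4) := by
      rw [eq_div_iff hne]
      exact hGoal
    rw [hfin]
    field_simp
  · -- p ≡ 1 mod 4
    intro h4
    obtain ⟨n, hpn⟩ : ∃ n, p = 4*n+1 := ⟨p/4, by omega⟩
    have hmn : m = 2*n := by omega
    subst hmn
    rw [hconv]
    have h := congrArg (Int.cast : ℤ → ZMod p) (Teven_int n)
    push_cast at h
    exact_mod_cast h
end
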